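/- arXiv:math/0405495 — 19 statements merged into one kernel-verified Lean document; each statement's English description precedes it below -/
import Mathlib

section
/- Let H be an inner product space over the real or complex numbers and let a ∈ H be a unit vector (‖a‖ = 1). Suppose x₁, …, xₙ ∈ H are nonzero vectors and r ≥ 0 satisfies r ≤ Re⟨xᵢ, a⟩ / ‖xᵢ‖ for every i ∈ {1, …, n}. Then r · Σᵢ₌₁ⁿ ‖xᵢ‖ ≤ ‖Σᵢ₌₁ⁿ xᵢ‖, with equality if and only if Σᵢ₌₁ⁿ xᵢ = r (Σᵢ₌₁ⁿ ‖xᵢ‖) a. -/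
open RCLike Finset

/-- Diaz–Metcalf reverse triangle inequality. -/
theorem diaz_metcalf {𝕜 H : Type*} [RCLike 𝕜] [NormedAddCommGroup H]
    [InnerProductSpace 𝕜 H] {n : ℕ} (x : Fin n → H) (hx : ∀ i, x i ≠ 0)
    (a : H) (ha : ‖a‖ = 1) (r : ℝ) (hr : 0 ≤ r)
    (h : ∀ i, r ≤ re (inner 𝕜 (x i) a : 𝕜) / ‖x i‖) :
    r * ∑ i, ‖x i‖ ≤ ‖∑ i, x i‖ ∧
      (r * ∑ i, ‖x i‖ = ‖∑ i, x i‖ ↔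
        ∑ i, x i = ((r * ∑ i, ‖x i‖ : ℝ) : 𝕜) • a) := by
  set S : H := ∑ i, x i with hS
  have key : r * ∑ i, ‖x i‖ ≤ re (inner 𝕜 S a : 𝕜) := by
    rw [hS, sum_inner, map_sum, Finset.mul_sum]
    apply Finset.sum_le_sum
    intro i _
    have hxi : (0:ℝ) < ‖x i‖ := norm_pos_iff.mpr (hx i)
    have := (le_div_iff₀ hxi).mp (h i)
    linarith
  have hSa : re (inner 𝕜 S a : 𝕜) ≤ ‖S‖ := by
    calc re (inner 𝕜 S a : 𝕜) ≤ ‖(inner 𝕜 S a : 𝕜)‖ := RCLike.re_le_norm _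
      _ ≤ ‖S‖ * ‖a‖ := norm_inner_le_norm _ _
      _ = ‖S‖ := by rw [ha, mul_one]
  refine ⟨key.trans hSa, ?_, ?_⟩
  · intro heq
    have hre : re (inner 𝕜 S a : 𝕜) = ‖S‖ := le_antisymm hSa (heq ▸ key)
    have hz : ‖S - ((‖S‖ : ℝ) : 𝕜) • a‖ ^ 2 = 0 := by
      rw [@norm_sub_sq 𝕜, inner_smul_right, norm_smul, ha]
      simp [hre, RCLike.norm_ofReal, abs_of_nonneg (norm_nonneg S)]
      ring
    have : S - ((‖S‖ : ℝ) : 𝕜) • a = 0 := by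
      have := pow_eq_zero_iff (n := 2) (by norm_num) |>.mp hz
      exact norm_eq_zero.mp this
    rw [heq]
    exact sub_eq_zero.mp this
  · intro heq
    have hnn : 0 ≤ r * ∑ i, ‖x i‖ :=
      mul_nonneg hr (Finset.sum_nonneg fun i _ => norm_nonneg _)
    rw [heq, norm_smul, ha, mul_one, RCLike.norm_ofReal, abs_of_nonneg hnn]
end

section
/- Let H be an inner product space over the real or complex numbers and let a₁, …, a_m ∈ H be orthonormal vectors. Suppose x₁, …, xₙ ∈ H are nonzero vectors and r₁, …, r_m ≥ 0 satisfy r_k ≤ Re⟨xᵢ, a_k⟩ / ‖xᵢ‖ for every i ∈ {1, …, n} and k ∈ {1, …, m}. Then (Σ_{k=1}^m r_k²)^{1/2} · Σᵢ₌₁ⁿ ‖xᵢ‖ ≤ ‖Σᵢ₌₁ⁿ xᵢ‖, with equality if and only if Σᵢ₌₁ⁿ xᵢ = (Σᵢ₌₁ⁿ ‖xᵢ‖) Σ_{k=1}^m r_k a_k. -/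
open RCLike Finset

/-- Diaz–Metcalf reverse triangle inequality for orthonormal families. -/
theorem diaz_metcalf_orthonormal {𝕜 H : Type*} [RCLike 𝕜] [NormedAddCommGroup H]
    [InnerProductSpace 𝕜 H] {n m : ℕ} (x : Fin n → H) (hx : ∀ i, x i ≠ 0)
    (a : Fin m → H) (ha : Orthonormal 𝕜 a) (r : Fin m → ℝ) (hr : ∀ k, 0 ≤ r k)
    (h : ∀ i k, r k ≤ re (inner 𝕜 (x i) (a k) : 𝕜) / ‖x i‖) :
    Real.sqrt (∑ k, r k ^ 2) * ∑ i, ‖x i‖ ≤ ‖∑ i, x i‖ ∧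
      (Real.sqrt (∑ k, r k ^ 2) * ∑ i, ‖x i‖ = ‖∑ i, x i‖ ↔
        ∑ i, x i = ((∑ i, ‖x i‖ : ℝ) : 𝕜) • ∑ k, ((r k : ℝ) : 𝕜) • a k) := by
  set S : H := ∑ i, x i with hSdef
  set L : ℝ := ∑ i, ‖x i‖ with hLdef
  set y : H := ∑ k, ((r k : ℝ) : 𝕜) • a k with hydef
  have hL0 : (0:ℝ) ≤ L := Finset.sum_nonneg fun i _ => norm_nonneg _
  have hyn : ‖y‖ ^ 2 = ∑ k, r k ^ 2 := by
    rw [@norm_sq_eq_re_inner 𝕜, hydef, ha.inner_sum, map_sum]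
    exact Finset.sum_congr rfl fun k _ => by
      rw [conj_ofReal, ← ofReal_mul, ofReal_re, sq]
  have hs : Real.sqrt (∑ k, r k ^ 2) = ‖y‖ := by
    rw [← hyn, Real.sqrt_sq (norm_nonneg _)]
  -- key lower bound on re ⟪S, y⟫
  have key : ‖y‖ ^ 2 * L ≤ re (inner 𝕜 S y : 𝕜) := by
    have h1 : (inner 𝕜 S y : 𝕜) = ∑ k, ((r k : ℝ) : 𝕜) * (inner 𝕜 S (a k) : 𝕜) := by
      rw [hydef, inner_sum]
      exact Finset.sum_congr rfl fun k _ => inner_smul_right _ _ _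
    have h2 : re (inner 𝕜 S y : 𝕜) = ∑ k, r k * re (inner 𝕜 S (a k) : 𝕜) := by
      rw [h1, map_sum]
      exact Finset.sum_congr rfl fun k _ => by rw [re_ofReal_mul]
    rw [h2, hyn]
    have h3 : ∀ k, r k * L ≤ re (inner 𝕜 S (a k) : 𝕜) := by
      intro k
      have : re (inner 𝕜 S (a k) : 𝕜) = ∑ i, re (inner 𝕜 (x i) (a k) : 𝕜) := by
        rw [hSdef, sum_inner, map_sum]
      rw [this, hLdef, Finset.mul_sum]
      refine Finset.sum_le_sum fun i _ => ?_
      have hxi : (0:ℝ) < ‖x i‖ := norm_pos_iff.mpr (hx i)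
      exact (le_div_iff₀ hxi).mp (h i k)
    calc (∑ k, r k ^ 2) * L = ∑ k, r k * (r k * L) := by
          rw [Finset.sum_mul]; exact Finset.sum_congr rfl fun k _ => by ring
      _ ≤ ∑ k, r k * re (inner 𝕜 S (a k) : 𝕜) :=
          Finset.sum_le_sum fun k _ => mul_le_mul_of_nonneg_left (h3 k) (hr k)
  have cs : re (inner 𝕜 S y : 𝕜) ≤ ‖S‖ * ‖y‖ := re_inner_le_norm S y
  have hmain : ‖y‖ * L ≤ ‖S‖ := by
    rcases (norm_nonneg y).eq_or_lt with h0 | h0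
    · rw [← h0, zero_mul]; exact norm_nonneg _
    · nlinarith [key, cs]
  rw [hs]
  refine ⟨hmain, ?_, ?_⟩
  · intro hEq
    rcases (norm_nonneg y).eq_or_lt with h0 | h0
    · have hy0 : y = 0 := norm_eq_zero.mp h0.symm
      have hS0 : S = 0 := by
        have : ‖S‖ = 0 := by rw [← hEq, ← h0, zero_mul]
        exact norm_eq_zero.mp this
      rw [hS0, hy0, smul_zero]
    · have h1 : re (inner 𝕜 S y : 𝕜) = ‖S‖ * ‖y‖ := by
        refine le_antisymm cs ?_
        calc ‖S‖ * ‖y‖ = ‖y‖ ^ 2 * L := by rw [← hEq]; ring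
          _ ≤ re (inner 𝕜 S y : 𝕜) := key
      have h2 : ‖(inner 𝕜 S y : 𝕜)‖ ≤ ‖S‖ * ‖y‖ := norm_inner_le_norm S y
      have hnsq : ‖(inner 𝕜 S y : 𝕜)‖ ^ 2 = re (inner 𝕜 S y : 𝕜) ^ 2 + im (inner 𝕜 S y : 𝕜) ^ 2 := by
        rw [RCLike.norm_sq_eq_def]; ring
      have him : im (inner 𝕜 S y : 𝕜) = 0 := by nlinarith [norm_nonneg (inner 𝕜 S y : 𝕜)]
      have h3 : (inner 𝕜 S y : 𝕜) = ((‖S‖ : ℝ) : 𝕜) * ((‖y‖ : ℝ) : 𝕜) := by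
        apply RCLike.ext <;> simp [him, h1]
      have h4 : ((‖y‖ : ℝ) : 𝕜) • S = ((‖S‖ : ℝ) : 𝕜) • y := inner_eq_norm_mul_iff.mp h3
      have h5 : ((‖y‖ : ℝ) : 𝕜) • S = ((‖y‖ : ℝ) : 𝕜) • (((L : ℝ) : 𝕜) • y) := by
        rw [h4, ← hEq, smul_smul]; push_cast; ring_nf
      have hyne : ((‖y‖ : ℝ) : 𝕜) ≠ 0 := by
        simp only [ne_eq, ofReal_eq_zero]; exact ne_of_gt h0
      exact smul_right_injective H hyne h5
  · intro hEq
    rw [hEq, norm_smul]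
    simp [abs_of_nonneg hL0]
    ring
end

section
/- Let H be an inner product space over the real or complex numbers, let a ∈ H be a unit vector, and let ρ ∈ (0,1). If x₁, …, xₙ ∈ H satisfy ‖xᵢ − a‖ ≤ ρ for each i ∈ {1, …, n}, then √(1 − ρ²) · Σᵢ₌₁ⁿ ‖xᵢ‖ ≤ ‖Σᵢ₌₁ⁿ xᵢ‖, with equality if and only if Σᵢ₌₁ⁿ xᵢ = √(1 − ρ²) (Σᵢ₌₁ⁿ ‖xᵢ‖) a. -/
open RCLike Finset
open scoped InnerProductSpace

theorem reverse_triangle_ball {𝕜 H : Type*} [RCLike 𝕜] [NormedAddCommGroup H]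
    [InnerProductSpace 𝕜 H] {n : ℕ} (x : Fin n → H)
    (a : H) (ha : ‖a‖ = 1) (ρ : ℝ) (hρ : ρ ∈ Set.Ioo (0 : ℝ) 1)
    (h : ∀ i, ‖x i - a‖ ≤ ρ) :
    Real.sqrt (1 - ρ ^ 2) * ∑ i, ‖x i‖ ≤ ‖∑ i, x i‖ ∧
      (Real.sqrt (1 - ρ ^ 2) * ∑ i, ‖x i‖ = ‖∑ i, x i‖ ↔
        ∑ i, x i = ((Real.sqrt (1 - ρ ^ 2) * ∑ i, ‖x i‖ : ℝ) : 𝕜) • a) := by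
  obtain ⟨hρ0, hρ1⟩ := hρ
  set s := Real.sqrt (1 - ρ ^ 2) with hs
  have h1ρ : 0 < 1 - ρ ^ 2 := by nlinarith
  have hs2 : s ^ 2 = 1 - ρ ^ 2 := Real.sq_sqrt h1ρ.le
  have hspos : 0 < s := Real.sqrt_pos.mpr h1ρ
  have key : ∀ i, s * ‖x i‖ ≤ re (⟪x i, a⟫_𝕜) := by
    intro i
    have h2 := h i
    have hexp : ‖x i - a‖ ^ 2 = ‖x i‖ ^ 2 - 2 * re (⟪x i, a⟫_𝕜) + ‖a‖ ^ 2 :=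
      norm_sub_sq (𝕜 := 𝕜) _ _
    have h3 : ‖x i - a‖ ^ 2 ≤ ρ ^ 2 := by
      have := norm_nonneg (x i - a); nlinarith
    nlinarith [sq_nonneg (‖x i‖ - s), norm_nonneg (x i)]
  have hre : s * ∑ i, ‖x i‖ ≤ re (⟪∑ i, x i, a⟫_𝕜) := by
    rw [sum_inner, map_sum, Finset.mul_sum]
    exact Finset.sum_le_sum fun i _ => key i
  have hcs : re (⟪∑ i, x i, a⟫_𝕜) ≤ ‖∑ i, x i‖ := by
    have := re_inner_le_norm (𝕜 := 𝕜) (∑ i, x i) a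
    rwa [ha, mul_one] at this
  have hSnn : 0 ≤ ∑ i, ‖x i‖ := Finset.sum_nonneg fun i _ => norm_nonneg _
  refine ⟨hre.trans hcs, ?_, ?_⟩
  · intro heq
    set u := ∑ i, x i with hu
    have h4 : re (⟪u, a⟫_𝕜) = ‖u‖ := le_antisymm hcs (heq ▸ hre)
    have habs : ‖(⟪u, a⟫_𝕜)‖ ≤ ‖u‖ := by
      have := norm_inner_le_norm (𝕜 := 𝕜) u a
      rwa [ha, mul_one] at this
    have hrele : re (⟪u, a⟫_𝕜) ≤ ‖(⟪u, a⟫_𝕜)‖ := re_le_norm _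
    have hnorm : ‖(⟪u, a⟫_𝕜)‖ = re (⟪u, a⟫_𝕜) := le_antisymm (by linarith) hrele
    have him : im (⟪u, a⟫_𝕜) = 0 := by
      have hsq : ‖(⟪u, a⟫_𝕜)‖ ^ 2 = re (⟪u, a⟫_𝕜) * re (⟪u, a⟫_𝕜) +
          im (⟪u, a⟫_𝕜) * im (⟪u, a⟫_𝕜) := norm_sq_eq_def
      rw [hnorm] at hsq
      have h0 : im (⟪u, a⟫_𝕜) * im (⟪u, a⟫_𝕜) = 0 := by nlinarith
      exact mul_self_eq_zero.mp h0
    have hz : (⟪u, a⟫_𝕜) = ((‖u‖ : ℝ) : 𝕜) :=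
      RCLike.ext (by simp [h4]) (by simp [him])
    have := (inner_eq_norm_mul_iff (𝕜 := 𝕜) (x := u) (y := a)).mp (by
      rw [hz, ha]; push_cast; ring)
    rw [ha] at this
    simp only [RCLike.ofReal_one, one_smul] at this
    rw [this, ← heq]
  · intro heq
    rw [heq, norm_smul]
    have : ‖(((s * ∑ i, ‖x i‖ : ℝ)) : 𝕜)‖ = |s * ∑ i, ‖x i‖| := by
      rw [RCLike.norm_ofReal]
    rw [this, ha, mul_one, abs_of_nonneg (by positivity)]
end

section
/- Let H be an inner product space over the real or complex numbers and let a₁, …, a_m ∈ H be orthonormal vectors. Suppose x₁, …, xₙ ∈ H are nonzero vectors and ρ₁, …, ρ_m ∈ (0,1) satisfy ‖xᵢ − a_k‖ ≤ ρ_k for each i ∈ {1, …, n} and k ∈ {1, …, m}. Then (m − Σ_{k=1}^m ρ_k²)^{1/2} · Σᵢ₌₁ⁿ ‖xᵢ‖ ≤ ‖Σᵢ₌₁ⁿ xᵢ‖, with equality if and only if Σᵢ₌₁ⁿ xᵢ = (Σᵢ₌₁ⁿ ‖xᵢ‖) Σ_{k=1}^m (1 − ρ_k²)^{1/2} a_k.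 -/
open RCLike Finset

theorem reverse_triangle_balls_orthonormal {𝕜 H : Type*} [RCLike 𝕜]
    [NormedAddCommGroup H] [InnerProductSpace 𝕜 H] {n m : ℕ}
    (x : Fin n → H) (hx : ∀ i, x i ≠ 0)
    (a : Fin m → H) (ha : Orthonormal 𝕜 a)
    (ρ : Fin m → ℝ) (hρ : ∀ k, ρ k ∈ Set.Ioo (0 : ℝ) 1)
    (h : ∀ i k, ‖x i - a k‖ ≤ ρ k) :
    Real.sqrt ((m : ℝ) - ∑ k, ρ k ^ 2) * ∑ i, ‖x i‖ ≤ ‖∑ i, x i‖ ∧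
      (Real.sqrt ((m : ℝ) - ∑ k, ρ k ^ 2) * ∑ i, ‖x i‖ = ‖∑ i, x i‖ ↔
        ∑ i, x i = ((∑ i, ‖x i‖ : ℝ) : 𝕜) •
          ∑ k, ((Real.sqrt (1 - ρ k ^ 2) : ℝ) : 𝕜) • a k) := by
  classical
  set S : ℝ := ∑ i, ‖x i‖ with hS
  set y : H := ∑ i, x i with hy
  set r : Fin m → ℝ := fun k => Real.sqrt (1 - ρ k ^ 2) with hr
  set c : H := ∑ k, ((r k : ℝ) : 𝕜) • a k with hc
  have hterm : ∀ k, 0 < 1 - ρ k ^ 2 := fun k => by nlinarith [(hρ k).1, (hρ k).2]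
  have hrpos : ∀ k, 0 < r k := fun k => Real.sqrt_pos.mpr (hterm k)
  have hrsq : ∀ k, r k ^ 2 = 1 - ρ k ^ 2 := fun k => Real.sq_sqrt (hterm k).le
  have hC2 : (m : ℝ) - ∑ k, ρ k ^ 2 = ∑ k, r k ^ 2 := by
    simp [hrsq, Finset.sum_sub_distrib]
  have hSnn : (0 : ℝ) ≤ S := Finset.sum_nonneg fun i _ => norm_nonneg _
  -- norm of c
  have hcnorm_sq : ‖c‖ ^ 2 = ∑ k, r k ^ 2 := by
    have h2 : ((‖c‖ : ℝ) : 𝕜) ^ 2 = ((∑ k, r k ^ 2 : ℝ) : 𝕜) := by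
      rw [← inner_self_eq_norm_sq_to_K (𝕜 := 𝕜), hc,
        ha.inner_sum (fun k => ((r k : ℝ) : 𝕜)) (fun k => ((r k : ℝ) : 𝕜)) Finset.univ]
      push_cast
      simp [conj_ofReal, sq]
    exact_mod_cast h2
  have hcnorm : ‖c‖ = Real.sqrt ((m : ℝ) - ∑ k, ρ k ^ 2) := by
    rw [hC2, ← hcnorm_sq, Real.sqrt_sq (norm_nonneg _)]
  -- key pointwise inequality
  have hkey : ∀ i k, ‖x i‖ * r k ^ 2 ≤ r k * re (inner 𝕜 (a k) (x i)) := by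
    intro i k
    have h1 : ‖x i - a k‖ ^ 2 ≤ ρ k ^ 2 := by
      have := h i k
      nlinarith [norm_nonneg (x i - a k)]
    have h2 : ‖x i - a k‖ ^ 2 = ‖x i‖ ^ 2 - 2 * re (inner 𝕜 (x i) (a k)) + ‖a k‖ ^ 2 :=
      norm_sub_sq (𝕜 := 𝕜) _ _
    have h3 : ‖a k‖ = 1 := ha.1 k
    have h4 : re (inner 𝕜 (x i) (a k)) = re (inner 𝕜 (a k) (x i)) := inner_re_symm _ _
    have h5 : 2 * re (inner 𝕜 (a k) (x i)) ≥ ‖x i‖ ^ 2 + 1 - ρ k ^ 2 := by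
      rw [← h4]; nlinarith
    nlinarith [sq_nonneg (‖x i‖ - r k), (hrpos k).le, hrsq k,
      mul_nonneg (hrpos k).le (sq_nonneg (‖x i‖ - r k))]
  -- re ⟪c, y⟫
  have hre : re (inner 𝕜 c y) = ∑ k, ∑ i, r k * re (inner 𝕜 (a k) (x i)) := by
    rw [hc, hy, sum_inner]
    rw [map_sum]
    refine Finset.sum_congr rfl fun k _ => ?_
    rw [inner_smul_left, conj_ofReal, re_ofReal_mul, inner_sum, map_sum, Finset.mul_sum]
  have hchain : (∑ k, r k ^ 2) * S ≤ re (inner 𝕜 c y) := by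
    rw [hre, Finset.sum_mul]
    refine Finset.sum_le_sum fun k _ => ?_
    rw [hS, Finset.mul_sum]
    exact Finset.sum_le_sum fun i _ => by
      have := hkey i k; linarith [this]
  have hCS : re (inner 𝕜 c y) ≤ ‖c‖ * ‖y‖ := re_inner_le_norm _ _
  have hineq : Real.sqrt ((m : ℝ) - ∑ k, ρ k ^ 2) * S ≤ ‖y‖ := by
    rcases Nat.eq_zero_or_pos m with hm | hm
    · subst hm
      simp [Real.sqrt_eq_zero', norm_nonneg]
    · have hC2pos : (0 : ℝ) < ∑ k, r k ^ 2 :=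
        Finset.sum_pos (fun k _ => pow_pos (hrpos k) 2)
          (Finset.univ_nonempty_iff.mpr ⟨⟨0, hm⟩⟩)
      have hcn : 0 < ‖c‖ := by
        rw [hcnorm, hC2]; exact Real.sqrt_pos.mpr hC2pos
      have : ‖c‖ ^ 2 * S ≤ ‖c‖ * ‖y‖ := by
        rw [hcnorm_sq]; exact hchain.trans hCS
      rw [← hcnorm]
      nlinarith
  refine ⟨hineq, ?_, ?_⟩
  · -- forward
    intro heq
    rcases Nat.eq_zero_or_pos m with hm | hm
    · subst hm
      have : ‖y‖ = 0 := by
        rw [← heq]; simp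
      simp only [norm_eq_zero] at this
      rw [this]
      simp [hc]
    · have hC2pos : (0 : ℝ) < ∑ k, r k ^ 2 :=
        Finset.sum_pos (fun k _ => pow_pos (hrpos k) 2)
          (Finset.univ_nonempty_iff.mpr ⟨⟨0, hm⟩⟩)
      have hcn : 0 < ‖c‖ := by
        rw [hcnorm, hC2]; exact Real.sqrt_pos.mpr hC2pos
      have hynorm : ‖y‖ = ‖c‖ * S := by
        rw [← heq, hcnorm]
      have hEqCS : re (inner 𝕜 c y) = ‖c‖ * ‖y‖ := by
        have h1 : ‖c‖ * ‖y‖ = (∑ k, r k ^ 2) * S := by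
          rw [hynorm, ← hcnorm_sq]; ring
        linarith [hchain, hCS]
      -- Cauchy-Schwarz equality
      have hv : ((‖c‖ : ℝ) : 𝕜) • y = ((‖y‖ : ℝ) : 𝕜) • c := by
        have hn : ‖((‖c‖ : ℝ) : 𝕜) • y - ((‖y‖ : ℝ) : 𝕜) • c‖ ^ 2 = 0 := by
          rw [norm_sub_sq (𝕜 := 𝕜)]
          rw [inner_smul_left, inner_smul_right, conj_ofReal, ← mul_assoc, ← ofReal_mul,
            re_ofReal_mul, inner_re_symm, hEqCS]
          rw [norm_smul, norm_smul]
          simp only [norm_ofReal, abs_of_nonneg (norm_nonneg c), abs_of_nonneg (norm_nonneg y)]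
          ring
        have := (pow_eq_zero_iff (two_ne_zero)).mp hn
        rw [norm_eq_zero, sub_eq_zero] at this
        exact this
      have hScast : ((‖y‖ : ℝ) : 𝕜) = ((‖c‖ : ℝ) : 𝕜) * ((S : ℝ) : 𝕜) := by
        rw [hynorm]; push_cast; ring
      have hcne : ((‖c‖ : ℝ) : 𝕜) ≠ 0 := by
        simp only [ne_eq, ofReal_eq_zero]
        exact hcn.ne'
      rw [hScast, mul_smul] at hv
      exact smul_right_injective H hcne hv
  · -- backward
    intro heq
    rw [hy] at heq ⊢
    rw [heq, norm_smul, norm_ofReal, abs_of_nonneg hSnn, hcnorm]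
    ring
end

section
/- Let H be an inner product space over the real or complex numbers, let a ∈ H be a unit vector, and let M ≥ m > 0. If x₁, …, xₙ ∈ H satisfy Re⟨M a − xᵢ, xᵢ − m a⟩ ≥ 0 for each i ∈ {1, …, n}, then (2√(mM)/(m + M)) · Σᵢ₌₁ⁿ ‖xᵢ‖ ≤ ‖Σᵢ₌₁ⁿ xᵢ‖, with equality if and only if Σᵢ₌₁ⁿ xᵢ = (2√(mM)/(m + M)) (Σᵢ₌₁ⁿ ‖xᵢ‖) a. -/
open RCLike Finset

theorem reverse_triangle_mM {𝕜 H : Type*} [RCLike 𝕜] [NormedAddCommGroup H]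
    [InnerProductSpace 𝕜 H] {n : ℕ} (x : Fin n → H)
    (a : H) (ha : ‖a‖ = 1) (m M : ℝ) (hm : 0 < m) (hmM : m ≤ M)
    (h : ∀ i, 0 ≤ re (inner 𝕜 ((M : 𝕜) • a - x i) (x i - (m : 𝕜) • a) : 𝕜)) :
    2 * Real.sqrt (m * M) / (m + M) * ∑ i, ‖x i‖ ≤ ‖∑ i, x i‖ ∧
      (2 * Real.sqrt (m * M) / (m + M) * ∑ i, ‖x i‖ = ‖∑ i, x i‖ ↔
        ∑ i, x i = ((2 * Real.sqrt (m * M) / (m + M) * ∑ i, ‖x i‖ : ℝ) : 𝕜) • a) := by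
  set r := 2 * Real.sqrt (m * M) / (m + M) with hr
  have hmM0 : 0 < m + M := by linarith
  have hr0 : 0 ≤ r := div_nonneg (by positivity) hmM0.le
  have hsq : Real.sqrt (m * M) ^ 2 = m * M := Real.sq_sqrt (mul_nonneg hm.le (hm.trans_le hmM).le)
  have key : ∀ i, r * ‖x i‖ ≤ re (inner 𝕜 a (x i) : 𝕜) := by
    intro i
    have h1 := h i
    have hexp : re (inner 𝕜 ((M : 𝕜) • a - x i) (x i - (m : 𝕜) • a) : 𝕜)
        = (m + M) * re (inner 𝕜 a (x i) : 𝕜) - ‖x i‖ ^ 2 - m * M := by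
      simp only [inner_sub_left, inner_sub_right, inner_smul_left, inner_smul_right,
        map_sub, map_mul, conj_ofReal, mul_re, ofReal_re, ofReal_im, zero_mul, sub_zero,
        inner_self_eq_norm_sq, inner_re_symm (x i) a]
      rw [ha]; ring
    rw [hexp] at h1
    have h4 : 2 * Real.sqrt (m * M) * ‖x i‖ ≤ ‖x i‖ ^ 2 + m * M := by
      nlinarith [sq_nonneg (‖x i‖ - Real.sqrt (m * M))]
    rw [hr, div_mul_eq_mul_div, div_le_iff₀ hmM0]
    nlinarith
  have hsum : r * ∑ i, ‖x i‖ ≤ re (inner 𝕜 a (∑ i, x i) : 𝕜) := by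
    rw [inner_sum, map_sum, mul_sum]
    exact Finset.sum_le_sum fun i _ => key i
  have hcs : re (inner 𝕜 a (∑ i, x i) : 𝕜) ≤ ‖∑ i, x i‖ := by
    have := re_inner_le_norm (𝕜 := 𝕜) a (∑ i, x i)
    rwa [ha, one_mul] at this
  refine ⟨hsum.trans hcs, ?_, ?_⟩
  · intro heq
    set s := ∑ i, x i with hs
    have h5 : re (inner 𝕜 a s : 𝕜) = ‖s‖ := le_antisymm hcs (heq ▸ hsum)
    have h6 : ‖s - ((‖s‖ : ℝ) : 𝕜) • a‖ ^ 2 = 0 := by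
      rw [@norm_sub_sq 𝕜, inner_smul_right, re_ofReal_mul, inner_re_symm s a, h5,
        norm_smul, RCLike.norm_ofReal, abs_norm, ha]
      ring
    have h7 : s = ((‖s‖ : ℝ) : 𝕜) • a := by
      have := pow_eq_zero_iff (n := 2) (by norm_num) |>.mp h6
      rw [norm_eq_zero, sub_eq_zero] at this
      exact this
    rw [h7, ← heq]
  · intro heq
    rw [heq, norm_smul, RCLike.norm_ofReal,
      abs_of_nonneg (mul_nonneg hr0 (Finset.sum_nonneg fun i _ => norm_nonneg _)), ha, mul_one]
end

section
/- Let H be an inner product space over the real or complex numbers, let a ∈ H be a unit vector, and let M ≥ m > 0. If x₁, …, xₙ ∈ H satisfy Re⟨M a − xᵢ, xᵢ − m a⟩ ≥ 0 for each i ∈ {1, …, n}, then Σᵢ₌₁ⁿ ‖xᵢ‖ − ‖Σᵢ₌₁ⁿ xᵢ‖ ≤ ((√M − √m)² / (2√(mM))) · ‖Σᵢ₌₁ⁿ xᵢ‖. -/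
open RCLike Finset

theorem reverse_triangle_mM_additive {𝕜 H : Type*} [RCLike 𝕜] [NormedAddCommGroup H]
    [InnerProductSpace 𝕜 H] {n : ℕ} (x : Fin n → H)
    (a : H) (ha : ‖a‖ = 1) (m M : ℝ) (hm : 0 < m) (hmM : m ≤ M)
    (h : ∀ i, 0 ≤ re (inner 𝕜 ((M : 𝕜) • a - x i) (x i - (m : 𝕜) • a) : 𝕜)) :
    ∑ i, ‖x i‖ - ‖∑ i, x i‖ ≤
      (Real.sqrt M - Real.sqrt m) ^ 2 / (2 * Real.sqrt (m * M)) * ‖∑ i, x i‖ := by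
  set s := Real.sqrt m with hs
  set t := Real.sqrt M with ht
  have hs2 : s ^ 2 = m := Real.sq_sqrt hm.le
  have ht2 : t ^ 2 = M := Real.sq_sqrt (hm.le.trans hmM)
  have hspos : 0 < s := Real.sqrt_pos.mpr hm
  have hst : s ≤ t := Real.sqrt_le_sqrt hmM
  have hmMsqrt : Real.sqrt (m * M) = s * t := Real.sqrt_mul hm.le M
  -- key pointwise bound
  have key : ∀ i, 2 * (s * t) * ‖x i‖ ≤ (m + M) * re (inner 𝕜 (x i) a : 𝕜) := by
    intro i
    have h1 := h i
    have expand : re (inner 𝕜 ((M : 𝕜) • a - x i) (x i - (m : 𝕜) • a) : 𝕜)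
        = (m + M) * re (inner 𝕜 (x i) a : 𝕜) - ‖x i‖ ^ 2 - m * M := by
      have haa : re (inner 𝕜 a a : 𝕜) = 1 := by
        rw [inner_self_eq_norm_sq, ha]; norm_num
      have hsym : re (inner 𝕜 a (x i) : 𝕜) = re (inner 𝕜 (x i) a : 𝕜) := inner_re_symm a (x i)
      have hxx : re (inner 𝕜 (x i) (x i) : 𝕜) = ‖x i‖ ^ 2 := inner_self_eq_norm_sq (x i)
      simp only [inner_sub_left, inner_sub_right, inner_smul_left, inner_smul_right,
        map_sub, map_add, conj_ofReal]
      simp only [re_ofReal_mul, map_sub]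
      rw [hsym, haa, hxx]
      ring
    have sq : 2 * (s * t) * ‖x i‖ ≤ ‖x i‖ ^ 2 + m * M := by
      nlinarith [sq_nonneg (‖x i‖ - s * t), sq_nonneg s, sq_nonneg t]
    rw [expand] at h1
    linarith
  -- sum it up
  have hsum : 2 * (s * t) * ∑ i, ‖x i‖ ≤ (m + M) * ‖∑ i, x i‖ := by
    have h2 : 2 * (s * t) * ∑ i, ‖x i‖ ≤ (m + M) * re (inner 𝕜 (∑ i, x i) a : 𝕜) := by
      rw [sum_inner, map_sum, Finset.mul_sum, Finset.mul_sum]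
      exact Finset.sum_le_sum fun i _ => key i
    have h3 : re (inner 𝕜 (∑ i, x i) a : 𝕜) ≤ ‖∑ i, x i‖ := by
      calc re (inner 𝕜 (∑ i, x i) a : 𝕜) ≤ ‖∑ i, x i‖ * ‖a‖ := re_inner_le_norm _ _
      _ = ‖∑ i, x i‖ := by rw [ha, mul_one]
    have : (m + M) * re (inner 𝕜 (∑ i, x i) a : 𝕜) ≤ (m + M) * ‖∑ i, x i‖ :=
      mul_le_mul_of_nonneg_left h3 (by linarith)
    linarith
  rw [hmMsqrt, div_mul_eq_mul_div, le_div_iff₀ (mul_pos two_pos (mul_pos hspos (hspos.trans_le hst)))]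
  nlinarith [norm_nonneg (∑ i, x i), Finset.sum_nonneg (fun i (_ : i ∈ Finset.univ) => norm_nonneg (x i))]
end

section
/- Let H be an inner product space over the real or complex numbers and let x, z, Z ∈ H. Then Re⟨Z − x, x − z⟩ ≥ 0 if and only if ‖x − (Z + z)/2‖ ≤ (1/2)‖Z − z‖. -/
open RCLike

theorem re_inner_nonneg_iff_norm_le {𝕜 H : Type*} [RCLike 𝕜] [NormedAddCommGroup H]
    [InnerProductSpace 𝕜 H] (x z Z : H) :
    0 ≤ re (inner 𝕜 (Z - x) (x - z) : 𝕜) ↔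
      ‖x - (2 : 𝕜)⁻¹ • (Z + z)‖ ≤ 2⁻¹ * ‖Z - z‖ := by
  have h1 : x - (2 : 𝕜)⁻¹ • (Z + z) = (2 : 𝕜)⁻¹ • ((x - z) - (Z - x)) := by
    match_scalars <;> push_cast <;> ring
  have h2 : Z - z = (Z - x) + (x - z) := by abel
  rw [h1, norm_smul]
  have hn : ‖(2 : 𝕜)⁻¹‖ = 2⁻¹ := by
    rw [norm_inv, RCLike.norm_ofNat]
  rw [hn]
  rw [mul_le_mul_iff_right₀ (by norm_num : (0:ℝ) < 2⁻¹)]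
  rw [h2, ← pow_le_pow_iff_left₀ (norm_nonneg _) (norm_nonneg _) two_ne_zero,
    norm_sub_sq (𝕜 := 𝕜), norm_add_sq (𝕜 := 𝕜)]
  have := inner_re_symm (𝕜 := 𝕜) (Z - x) (x - z)
  constructor <;> intro h <;> nlinarith
end

section
/- Let H be an inner product space over the real or complex numbers, let a ∈ H be a unit vector, let M ≥ m > 0, and let x ∈ H be a nonzero vector with Re⟨M a − x, x − m a⟩ ≥ 0. Then Re⟨x, a⟩ / ‖x‖ ≥ 2√(mM)/(m + M). -/
open RCLike

theorem re_inner_div_norm_ge {𝕜 H : Type*} [RCLike 𝕜] [NormedAddCommGroup H]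
    [InnerProductSpace 𝕜 H] (a : H) (ha : ‖a‖ = 1) (m M : ℝ) (hm : 0 < m)
    (hmM : m ≤ M) (x : H) (hx : x ≠ 0)
    (h : 0 ≤ re (inner 𝕜 ((M : 𝕜) • a - x) (x - (m : 𝕜) • a) : 𝕜)) :
    2 * Real.sqrt (m * M) / (m + M) ≤ re (inner 𝕜 x a : 𝕜) / ‖x‖ := by
  have hxa : re (inner 𝕜 a x : 𝕜) = re (inner 𝕜 x a : 𝕜) := by
    exact inner_re_symm a x
  have hxx : re (inner 𝕜 x x : 𝕜) = ‖x‖ ^ 2 := by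
    rw [inner_self_eq_norm_sq]
  have haa : re (inner 𝕜 a a : 𝕜) = 1 := by
    rw [inner_self_eq_norm_sq, ha]; norm_num
  have hexp : 0 ≤ M * re (inner 𝕜 x a : 𝕜) - m * M - ‖x‖ ^ 2 + m * re (inner 𝕜 x a : 𝕜) := by
    have := h
    simp only [inner_sub_left, inner_sub_right, inner_smul_left, inner_smul_right,
      map_sub, map_mul, conj_ofReal, re_ofReal_mul] at this
    rw [hxa, hxx, haa] at this
    linarith
  have hnx : 0 < ‖x‖ := norm_pos_iff.mpr hx
  have hmM' : 0 < m + M := by linarith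
  have key : 2 * Real.sqrt (m * M) * ‖x‖ ≤ (m + M) * re (inner 𝕜 x a : 𝕜) := by
    have hamgm : 2 * Real.sqrt (m * M) * ‖x‖ ≤ ‖x‖ ^ 2 + m * M := by
      nlinarith [Real.sq_sqrt (mul_nonneg hm.le (hm.trans_le hmM).le),
        Real.sqrt_nonneg (m * M), sq_nonneg (‖x‖ - Real.sqrt (m * M))]
    nlinarith
  rw [div_le_div_iff₀ hmM' hnx]
  linarith [key]
end

section
/- Let H be an inner product space over the real or complex numbers, let e ∈ H with ‖e‖ = 1, and let x₁, …, xₙ ∈ H. If k₁, …, kₙ ≥ 0 satisfy ‖xᵢ‖ − Re⟨e, xᵢ⟩ ≤ kᵢ for each i ∈ {1, …, n}, then 0 ≤ Σᵢ₌₁ⁿ ‖xᵢ‖ − ‖Σᵢ₌₁ⁿ xᵢ‖ ≤ Σᵢ₌₁ⁿ kᵢ. Moreover, equality Σᵢ₌₁ⁿ ‖xᵢ‖ − ‖Σᵢ₌₁ⁿ xᵢ‖ = Σᵢ₌₁ⁿ kᵢ holds if and only if Σᵢ₌₁ⁿ ‖xᵢ‖ ≥ Σᵢ₌₁ⁿ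 kᵢ and Σᵢ₌₁ⁿ xᵢ = (Σᵢ₌₁ⁿ ‖xᵢ‖ − Σᵢ₌₁ⁿ kᵢ) e. -/
open RCLike Finset

theorem additive_reverse_triangle {𝕜 H : Type*} [RCLike 𝕜] [NormedAddCommGroup H]
    [InnerProductSpace 𝕜 H] {n : ℕ} (e : H) (he : ‖e‖ = 1)
    (x : Fin n → H) (k : Fin n → ℝ) (hk : ∀ i, 0 ≤ k i)
    (h : ∀ i, ‖x i‖ - re (inner 𝕜 e (x i) : 𝕜) ≤ k i) :
    (0 ≤ ∑ i, ‖x i‖ - ‖∑ i, x i‖ ∧ ∑ i, ‖x i‖ - ‖∑ i, x i‖ ≤ ∑ i, k i) ∧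
      (∑ i, ‖x i‖ - ‖∑ i, x i‖ = ∑ i, k i ↔
        ∑ i, k i ≤ ∑ i, ‖x i‖ ∧
          ∑ i, x i = ((∑ i, ‖x i‖ - ∑ i, k i : ℝ) : 𝕜) • e) := by
  set S := ∑ i, x i with hS
  have htri : ‖S‖ ≤ ∑ i, ‖x i‖ := norm_sum_le _ _
  have hreS : re (inner 𝕜 e S : 𝕜) = ∑ i, re (inner 𝕜 e (x i) : 𝕜) := by
    rw [hS, inner_sum, map_sum]
  have hre : (∑ i, ‖x i‖) - ∑ i, k i ≤ re (inner 𝕜 e S : 𝕜) := by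
    rw [hreS, ← Finset.sum_sub_distrib]
    exact Finset.sum_le_sum fun i _ => by linarith [h i]
  have hCS : re (inner 𝕜 e S : 𝕜) ≤ ‖S‖ := by
    calc re (inner 𝕜 e S : 𝕜) ≤ ‖(inner 𝕜 e S : 𝕜)‖ := RCLike.re_le_norm _
      _ ≤ ‖e‖ * ‖S‖ := norm_inner_le_norm _ _
      _ = ‖S‖ := by rw [he, one_mul]
  have hSnn : (0:ℝ) ≤ ‖S‖ := norm_nonneg _
  refine ⟨⟨by linarith, by linarith⟩, ?_, ?_⟩
  · intro heq
    have hN : ∑ i, k i ≤ ∑ i, ‖x i‖ := by linarith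
    refine ⟨hN, ?_⟩
    have hre2 : re (inner 𝕜 e S : 𝕜) = ‖S‖ := le_antisymm hCS (by linarith)
    have key : S = (‖S‖ : 𝕜) • e := by
      have h0 : ‖S - (‖S‖ : 𝕜) • e‖ ^ 2 = 0 := by
        rw [norm_sub_sq (𝕜 := 𝕜), inner_smul_right, re_ofReal_mul, inner_re_symm,
          hre2, norm_smul, RCLike.norm_ofReal, he, mul_one]
        simp [abs_of_nonneg hSnn]
        ring
      have := pow_eq_zero_iff (n := 2) (by norm_num) |>.mp h0
      have := norm_eq_zero.mp this
      exact sub_eq_zero.mp this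
    have hnorm : ‖S‖ = ∑ i, ‖x i‖ - ∑ i, k i := by linarith
    rw [key, hnorm]
  · rintro ⟨hN, hSe⟩
    have : ‖S‖ = ∑ i, ‖x i‖ - ∑ i, k i := by
      rw [hSe, norm_smul, RCLike.norm_ofReal, he, mul_one, abs_of_nonneg (by linarith)]
    linarith
end

section
/- Let H be an inner product space over the real or complex numbers, let e₁, …, e_m ∈ H be orthonormal vectors, and let x₁, …, xₙ ∈ H. If M_{ik} ≥ 0 satisfy ‖xᵢ‖ − Re⟨e_k, xᵢ⟩ ≤ M_{ik} for each i ∈ {1, …, n} and k ∈ {1, …, m}, then Σᵢ₌₁ⁿ ‖xᵢ‖ ≤ (1/√m) ‖Σᵢ₌₁ⁿ xᵢ‖ + (1/m) Σᵢ₌₁ⁿ Σ_{k=1}^m M_{ik}. Equality holds if and only if Σᵢ₌₁ⁿ ‖xᵢ‖ ≥ (1/m) Σᵢ₌₁ⁿ Σ_{k=1}^m M_{ik} and Σᵢ₌₁ⁿ xᵢ = (Σᵢ₌₁ⁿ ‖xᵢ‖ − (1/m) Σᵢ₌₁ⁿ Σ_{k=1}^m M_{ik}) Σ_{k=1}^m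 e_k. -/
open RCLike Finset

theorem additive_reverse_triangle_orthonormal {𝕜 H : Type*} [RCLike 𝕜]
    [NormedAddCommGroup H] [InnerProductSpace 𝕜 H] {n m : ℕ} (hm : 0 < m)
    (e : Fin m → H) (he : Orthonormal 𝕜 e)
    (x : Fin n → H) (M : Fin n → Fin m → ℝ) (hM : ∀ i k, 0 ≤ M i k)
    (h : ∀ i k, ‖x i‖ - re (inner 𝕜 (e k) (x i) : 𝕜) ≤ M i k) :
    (∑ i, ‖x i‖ ≤ (1 / Real.sqrt m) * ‖∑ i, x i‖ + (1 / m) * ∑ i, ∑ k, M i k) ∧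
      (∑ i, ‖x i‖ = (1 / Real.sqrt m) * ‖∑ i, x i‖ + (1 / m) * ∑ i, ∑ k, M i k ↔
        (1 / m) * ∑ i, ∑ k, M i k ≤ ∑ i, ‖x i‖ ∧
          ∑ i, x i = ((∑ i, ‖x i‖ - (1 / m) * ∑ i, ∑ k, M i k : ℝ) : 𝕜) •
            ∑ k, e k) := by
  have hm' : (0:ℝ) < m := Nat.cast_pos.mpr hm
  have hsq : (0:ℝ) < Real.sqrt m := Real.sqrt_pos.mpr hm'
  have hsqsq : Real.sqrt m * Real.sqrt m = (m:ℝ) := Real.mul_self_sqrt hm'.le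
  set E : H := ∑ k, e k with hE
  set S : H := ∑ i, x i with hS
  set s : ℝ := ∑ i, ‖x i‖ with hs
  set T : ℝ := (1 / m) * ∑ i, ∑ k, M i k with hT
  have hEE : (inner 𝕜 E E : 𝕜) = (m : 𝕜) := by
    rw [hE, sum_inner]
    simp [inner_sum, orthonormal_iff_ite.mp he]
  have hnE : ‖E‖ = Real.sqrt m := by
    have := norm_eq_sqrt_re_inner (𝕜 := 𝕜) E
    rw [hEE] at this
    simpa using this
  have hES : re (inner 𝕜 E S : 𝕜) = ∑ k, ∑ i, re (inner 𝕜 (e k) (x i) : 𝕜) := by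
    simp only [hE, hS, sum_inner, inner_sum, map_sum]
    exact Finset.sum_comm
  -- key summed inequality
  have key : (m:ℝ) * s - re (inner 𝕜 E S : 𝕜) ≤ ∑ i, ∑ k, M i k := by
    have h1 : ∀ k : Fin m, s - (∑ i, re (inner 𝕜 (e k) (x i) : 𝕜)) ≤ ∑ i, M i k := by
      intro k
      rw [hs, ← Finset.sum_sub_distrib]
      exact Finset.sum_le_sum fun i _ => h i k
    calc (m:ℝ) * s - re (inner 𝕜 E S : 𝕜)
        = ∑ k : Fin m, (s - ∑ i, re (inner 𝕜 (e k) (x i) : 𝕜)) := by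
          rw [hES, Finset.sum_sub_distrib, Finset.sum_const, card_univ,
            Fintype.card_fin, nsmul_eq_mul]
      _ ≤ ∑ k : Fin m, ∑ i, M i k := Finset.sum_le_sum fun k _ => h1 k
      _ = ∑ i, ∑ k, M i k := Finset.sum_comm
  have hCS : re (inner 𝕜 E S : 𝕜) ≤ Real.sqrt m * ‖S‖ := by
    have := re_inner_le_norm (𝕜 := 𝕜) E S
    rwa [hnE] at this
  have e1 : (m:ℝ) * (1 / Real.sqrt m) = Real.sqrt m := by
    rw [mul_one_div, div_eq_iff hsq.ne', hsqsq]
  have hT' : (m:ℝ) * T = ∑ i, ∑ k, M i k := by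
    rw [hT]; field_simp
  clear_value E S s T
  have hmain : s ≤ (1 / Real.sqrt m) * ‖S‖ + T := by
    rw [← mul_le_mul_iff_right₀ hm', mul_add, ← mul_assoc, e1, hT']
    linarith [key, hCS]
  refine ⟨hmain, ?_, ?_⟩
  · -- equality → conditions
    intro heq
    have hnS : ‖S‖ = Real.sqrt m * (s - T) := by
      have : (1 / Real.sqrt m) * ‖S‖ = s - T := by linarith [heq]
      field_simp at this
      linarith [this]
    have hc : 0 ≤ s - T := by
      nlinarith [norm_nonneg S, hsq]
    have hre : re (inner 𝕜 E S : 𝕜) = (m:ℝ) * (s - T) := by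
      have hub : re (inner 𝕜 E S : 𝕜) ≤ (m:ℝ) * (s - T) := by
        rw [← hsqsq]; nlinarith [hCS, hnS]
      have hlb : (m:ℝ) * (s - T) ≤ re (inner 𝕜 E S : 𝕜) := by
        rw [mul_sub, hT']
        linarith [key]
      linarith
    refine ⟨by linarith, ?_⟩
    have hzero : ‖S - ((s - T : ℝ) : 𝕜) • E‖ ^ 2 = 0 := by
      rw [norm_sub_sq (𝕜 := 𝕜), inner_smul_right, norm_smul, hnE, hnS]
      have hre2 : re ((((s - T : ℝ) : 𝕜)) * (inner 𝕜 S E : 𝕜)) = (s - T) * ((m:ℝ) * (s - T)) := by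
        rw [RCLike.re_ofReal_mul, inner_re_symm, hre]
      rw [hre2]
      have : ‖((s - T : ℝ) : 𝕜)‖ = s - T := by
        rw [RCLike.norm_ofReal, abs_of_nonneg hc]
      rw [this]
      nlinarith [hsqsq]
    have : S - ((s - T : ℝ) : 𝕜) • E = 0 := by
      have := pow_eq_zero_iff (n := 2) (by norm_num) |>.mp hzero
      exact norm_eq_zero.mp this
    exact sub_eq_zero.mp this
  · -- conditions → equality
    rintro ⟨hTs, hXE⟩
    have hc : 0 ≤ s - T := by linarith
    have hnS : ‖S‖ = (s - T) * Real.sqrt m := by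
      rw [hXE, norm_smul, RCLike.norm_ofReal, abs_of_nonneg hc, hnE]
    have h2 : 1 / Real.sqrt m * ((s - T) * Real.sqrt m) = s - T := by
      field_simp
    rw [hnS, h2]
    ring
end

section
/- Let H be an inner product space over the real or complex numbers, let e ∈ H with ‖e‖ = 1, let ρ ∈ (0,1), and suppose x₁, …, xₙ ∈ H satisfy ‖xᵢ − e‖ ≤ ρ for each i ∈ {1, …, n}. Then 0 ≤ Σᵢ₌₁ⁿ ‖xᵢ‖ − ‖Σᵢ₌₁ⁿ xᵢ‖ ≤ (ρ² / (√(1 − ρ²)(1 + √(1 − ρ²)))) · Re⟨Σᵢ₌₁ⁿ xᵢ, e⟩, and the latter quantity is at most (ρ² / (√(1 − ρ²)(1 + √(1 − ρ²)))) · ‖Σᵢ₌₁ⁿ xᵢ‖. -/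
open RCLike Finset

theorem additive_reverse_triangle_ball {𝕜 H : Type*} [RCLike 𝕜]
    [NormedAddCommGroup H] [InnerProductSpace 𝕜 H] {n : ℕ}
    (e : H) (he : ‖e‖ = 1) (ρ : ℝ) (hρ : ρ ∈ Set.Ioo (0 : ℝ) 1)
    (x : Fin n → H) (h : ∀ i, ‖x i - e‖ ≤ ρ) :
    0 ≤ ∑ i, ‖x i‖ - ‖∑ i, x i‖ ∧
      ∑ i, ‖x i‖ - ‖∑ i, x i‖ ≤
        ρ ^ 2 / (Real.sqrt (1 - ρ ^ 2) * (1 + Real.sqrt (1 - ρ ^ 2))) *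
          re (inner 𝕜 (∑ i, x i) e : 𝕜) ∧
      ρ ^ 2 / (Real.sqrt (1 - ρ ^ 2) * (1 + Real.sqrt (1 - ρ ^ 2))) *
          re (inner 𝕜 (∑ i, x i) e : 𝕜) ≤
        ρ ^ 2 / (Real.sqrt (1 - ρ ^ 2) * (1 + Real.sqrt (1 - ρ ^ 2))) *
          ‖∑ i, x i‖ := by
  obtain ⟨hρ0, hρ1⟩ := hρ
  set t := Real.sqrt (1 - ρ ^ 2) with ht
  have h1ρ : 0 < 1 - ρ ^ 2 := by nlinarith
  have ht0 : 0 < t := Real.sqrt_pos.mpr h1ρ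
  have ht2 : t ^ 2 = 1 - ρ ^ 2 := Real.sq_sqrt h1ρ.le
  -- key pointwise estimate
  have key : ∀ i, t * ‖x i‖ ≤ re (inner 𝕜 (x i) e : 𝕜) := by
    intro i
    have hsq : ‖x i - e‖ ^ 2 ≤ ρ ^ 2 := by
      have := h i
      nlinarith [norm_nonneg (x i - e)]
    have hexp : ‖x i - e‖ ^ 2 = ‖x i‖ ^ 2 - 2 * re (inner 𝕜 (x i) e : 𝕜) + ‖e‖ ^ 2 :=
      @norm_sub_sq 𝕜 _ _ _ _ (x i) e
    rw [hexp, he] at hsq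
    nlinarith [sq_nonneg (‖x i‖ - t)]
  set S := ∑ i, x i with hS
  have hinner : re (inner 𝕜 S e : 𝕜) = ∑ i, re (inner 𝕜 (x i) e : 𝕜) := by
    rw [hS, sum_inner, map_sum]
  have hsum : t * ∑ i, ‖x i‖ ≤ re (inner 𝕜 S e : 𝕜) := by
    rw [hinner, mul_sum]
    exact sum_le_sum fun i _ => key i
  have hCS : re (inner 𝕜 S e : 𝕜) ≤ ‖S‖ := by
    calc re (inner 𝕜 S e : 𝕜) ≤ ‖S‖ * ‖e‖ := re_inner_le_norm S e
    _ = ‖S‖ := by rw [he, mul_one]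
  have hR0 : 0 ≤ re (inner 𝕜 S e : 𝕜) := by
    refine le_trans ?_ hsum
    positivity
  have hNS : ‖S‖ ≤ ∑ i, ‖x i‖ := norm_sum_le _ _
  have hc : ρ ^ 2 / (t * (1 + t)) = (1 - t) / t := by
    rw [div_eq_div_iff (by positivity) ht0.ne']
    nlinarith
  refine ⟨by linarith, ?_, ?_⟩
  · rw [hc]
    have h1 : ∑ i, ‖x i‖ ≤ re (inner 𝕜 S e : 𝕜) / t := by
      rw [le_div_iff₀ ht0]
      linarith [hsum]
    have : (1 - t) / t * re (inner 𝕜 S e : 𝕜)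
        = re (inner 𝕜 S e : 𝕜) / t - re (inner 𝕜 S e : 𝕜) := by
      field_simp
    rw [this]
    linarith [hCS]
  · have hcpos : 0 ≤ ρ ^ 2 / (t * (1 + t)) := by positivity
    exact mul_le_mul_of_nonneg_left hCS hcpos
end

section
/- Let H be an inner product space over the real or complex numbers, let e ∈ H with ‖e‖ = 1, let ρ ∈ (0,1), and let x ∈ H satisfy ‖x − e‖ ≤ ρ. Then ‖x‖ ≤ (1/√(1 − ρ²)) · Re⟨x, e⟩. -/
open RCLike

theorem norm_le_re_inner_div_sqrt {𝕜 H : Type*} [RCLike 𝕜] [NormedAddCommGroup H]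
    [InnerProductSpace 𝕜 H] (e : H) (he : ‖e‖ = 1) (ρ : ℝ)
    (hρ : ρ ∈ Set.Ioo (0 : ℝ) 1) (x : H) (h : ‖x - e‖ ≤ ρ) :
    ‖x‖ ≤ (1 / Real.sqrt (1 - ρ ^ 2)) * re (inner 𝕜 x e : 𝕜) := by
  obtain ⟨hρ0, hρ1⟩ := hρ
  have h1 : (0:ℝ) < 1 - ρ ^ 2 := by nlinarith
  set s := Real.sqrt (1 - ρ ^ 2) with hs
  have hs0 : 0 < s := Real.sqrt_pos.mpr h1
  have hs2 : s ^ 2 = 1 - ρ ^ 2 := Real.sq_sqrt h1.le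
  have hsq : ‖x - e‖ ^ 2 = ‖x‖ ^ 2 - 2 * re (inner 𝕜 x e : 𝕜) + ‖e‖ ^ 2 :=
    @norm_sub_sq 𝕜 _ _ _ _ x e
  have hle : ‖x - e‖ ^ 2 ≤ ρ ^ 2 := by
    have := norm_nonneg (x - e)
    nlinarith
  have key : ‖x‖ ^ 2 + (1 - ρ ^ 2) ≤ 2 * re (inner 𝕜 x e : 𝕜) := by
    rw [he] at hsq; nlinarith
  have amgm : 2 * s * ‖x‖ ≤ ‖x‖ ^ 2 + s ^ 2 := by nlinarith [sq_nonneg (‖x‖ - s)]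
  rw [div_mul_eq_mul_div, one_mul, le_div_iff₀ hs0]
  nlinarith
end

section
/- Let H be an inner product space over the real or complex numbers, let e ∈ H with ‖e‖ = 1, and let M ≥ m > 0. If x₁, …, xₙ ∈ H satisfy Re⟨M e − xᵢ, xᵢ − m e⟩ ≥ 0 for each i ∈ {1, …, n}, then 0 ≤ Σᵢ₌₁ⁿ ‖xᵢ‖ − ‖Σᵢ₌₁ⁿ xᵢ‖ ≤ ((√M − √m)² / (2√(mM))) · Re⟨Σᵢ₌₁ⁿ xᵢ, e⟩, and the latter quantity is at most ((√M − √m)² / (2√(mM))) · ‖Σᵢ₌₁ⁿ xᵢ‖. -/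
open RCLike Finset

private theorem aux_key {𝕜 H : Type*} [RCLike 𝕜]
    [NormedAddCommGroup H] [InnerProductSpace 𝕜 H]
    (e : H) (he : ‖e‖ = 1) (m M : ℝ) (y : H)
    (h : 0 ≤ re (inner 𝕜 ((M : 𝕜) • e - y) (y - (m : 𝕜) • e) : 𝕜)) :
    ‖y‖^2 + m * M ≤ (M + m) * re (inner 𝕜 y e : 𝕜) := by
  simp only [inner_sub_left, inner_sub_right, inner_smul_left, inner_smul_right,
    map_sub, map_mul, conj_ofReal] at h
  have hre : re (inner 𝕜 e y : 𝕜) = re (inner 𝕜 y e : 𝕜) := inner_re_symm ..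
  rw [← inner_self_eq_norm_sq (𝕜 := 𝕜) y]
  simp only [mul_re, ofReal_re, ofReal_im, inner_self_eq_norm_sq, inner_self_eq_norm_sq_to_K,
    he, map_sub, map_mul, one_pow, map_one, one_re, one_im, ← ofReal_pow] at h ⊢
  rw [hre] at h; linarith

theorem additive_reverse_triangle_mM {𝕜 H : Type*} [RCLike 𝕜]
    [NormedAddCommGroup H] [InnerProductSpace 𝕜 H] {n : ℕ}
    (e : H) (he : ‖e‖ = 1) (m M : ℝ) (hm : 0 < m) (hmM : m ≤ M)
    (x : Fin n → H)
    (h : ∀ i, 0 ≤ re (inner 𝕜 ((M : 𝕜) • e - x i) (x i - (m : 𝕜) • e) : 𝕜)) :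
    0 ≤ ∑ i, ‖x i‖ - ‖∑ i, x i‖ ∧
      ∑ i, ‖x i‖ - ‖∑ i, x i‖ ≤
        (Real.sqrt M - Real.sqrt m) ^ 2 / (2 * Real.sqrt (m * M)) *
          re (inner 𝕜 (∑ i, x i) e : 𝕜) ∧
      (Real.sqrt M - Real.sqrt m) ^ 2 / (2 * Real.sqrt (m * M)) *
          re (inner 𝕜 (∑ i, x i) e : 𝕜) ≤
        (Real.sqrt M - Real.sqrt m) ^ 2 / (2 * Real.sqrt (m * M)) *
          ‖∑ i, x i‖ := by
  have hM : 0 < M := lt_of_lt_of_le hm hmM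
  have hs : Real.sqrt (m * M) = Real.sqrt m * Real.sqrt M := Real.sqrt_mul hm.le M
  have hsm : (0:ℝ) < Real.sqrt m := Real.sqrt_pos.2 hm
  have hsM : (0:ℝ) < Real.sqrt M := Real.sqrt_pos.2 hM
  have hsmM : (0:ℝ) < Real.sqrt (m * M) := Real.sqrt_pos.2 (by positivity)
  have hm2 : Real.sqrt m ^ 2 = m := Real.sq_sqrt hm.le
  have hM2 : Real.sqrt M ^ 2 = M := Real.sq_sqrt hM.le
  -- per-index bound
  have key : ∀ i, 2 * Real.sqrt (m * M) * ‖x i‖ ≤ (M + m) * re (inner 𝕜 (x i) e : 𝕜) := by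
    intro i
    have h1 := aux_key e he m M (x i) (h i)
    nlinarith [sq_nonneg (‖x i‖ - Real.sqrt (m * M)), Real.sq_sqrt (mul_nonneg hm.le hM.le : (0:ℝ) ≤ m * M)]
  have hsum : 2 * Real.sqrt (m * M) * (∑ i, ‖x i‖) ≤ (M + m) * re (inner 𝕜 (∑ i, x i) e : 𝕜) := by
    rw [sum_inner]
    rw [map_sum, mul_sum, mul_sum]
    exact sum_le_sum fun i _ => key i
  have hCS : re (inner 𝕜 (∑ i, x i) e : 𝕜) ≤ ‖∑ i, x i‖ := by
    calc re (inner 𝕜 (∑ i, x i) e : 𝕜) ≤ ‖∑ i, x i‖ * ‖e‖ := re_inner_le_norm _ _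
    _ = ‖∑ i, x i‖ := by rw [he, mul_one]
  have htri : ‖∑ i, x i‖ ≤ ∑ i, ‖x i‖ := norm_sum_le _ _
  have hc : (Real.sqrt M - Real.sqrt m) ^ 2 / (2 * Real.sqrt (m * M))
      = (M + m) / (2 * Real.sqrt (m * M)) - 1 := by
    field_simp
    nlinarith [hs]
  refine ⟨by linarith, ?_, ?_⟩
  · rw [hc]
    have h1 : ∑ i, ‖x i‖ ≤ (M + m) / (2 * Real.sqrt (m * M)) * re (inner 𝕜 (∑ i, x i) e : 𝕜) := by
      rw [div_mul_eq_mul_div, le_div_iff₀ (by positivity)]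
      linarith
    have hS : 0 ≤ re (inner 𝕜 (∑ i, x i) e : 𝕜) := by nlinarith [sum_nonneg (fun i (_ : i ∈ univ) => norm_nonneg (x i))]
    have := hCS
    nlinarith
  · have hcnn : 0 ≤ (Real.sqrt M - Real.sqrt m) ^ 2 / (2 * Real.sqrt (m * M)) := by positivity
    exact mul_le_mul_of_nonneg_left hCS hcnn
end

section
/- Let H be an inner product space over the real or complex numbers, let e ∈ H with ‖e‖ = 1, and let r₁, …, rₙ > 0. If x₁, …, xₙ ∈ H satisfy ‖xᵢ − e‖ ≤ rᵢ for each i ∈ {1, …, n}, then 0 ≤ Σᵢ₌₁ⁿ ‖xᵢ‖ − ‖Σᵢ₌₁ⁿ xᵢ‖ ≤ (1/2) Σᵢ₌₁ⁿ rᵢ². Equality in the second inequality holds if and only if Σᵢ₌₁ⁿ ‖xᵢ‖ ≥ (1/2) Σᵢ₌₁ⁿ rᵢ² and Σᵢ₌₁ⁿ xᵢ = (Σᵢ₌₁ⁿ ‖xᵢ‖ − (1/2) Σᵢ₌₁ⁿ rᵢ²) e. -/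
open RCLike Finset

theorem additive_reverse_triangle_radii {𝕜 H : Type*} [RCLike 𝕜]
    [NormedAddCommGroup H] [InnerProductSpace 𝕜 H] {n : ℕ}
    (e : H) (he : ‖e‖ = 1) (r : Fin n → ℝ) (hr : ∀ i, 0 < r i)
    (x : Fin n → H) (h : ∀ i, ‖x i - e‖ ≤ r i) :
    (0 ≤ ∑ i, ‖x i‖ - ‖∑ i, x i‖ ∧
      ∑ i, ‖x i‖ - ‖∑ i, x i‖ ≤ (1 / 2) * ∑ i, r i ^ 2) ∧
      (∑ i, ‖x i‖ - ‖∑ i, x i‖ = (1 / 2) * ∑ i, r i ^ 2 ↔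
        (1 / 2) * ∑ i, r i ^ 2 ≤ ∑ i, ‖x i‖ ∧
          ∑ i, x i = ((∑ i, ‖x i‖ - (1 / 2) * ∑ i, r i ^ 2 : ℝ) : 𝕜) • e) := by
  have key : ∀ i, ‖x i‖ - r i ^ 2 / 2 ≤ re (((inner 𝕜 (x i) e : 𝕜))) := by
    intro i
    have h2 : ‖x i - e‖ ^ 2 ≤ r i ^ 2 :=
      pow_le_pow_left₀ (norm_nonneg _) (h i) 2
    rw [norm_sub_sq (𝕜 := 𝕜), he] at h2
    nlinarith [sq_nonneg (‖x i‖ - 1)]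
  have hsum : re ((inner 𝕜 (∑ i, x i) e : 𝕜)) = ∑ i, re ((inner 𝕜 (x i) e : 𝕜)) := by
    rw [sum_inner, map_sum]
  have hre : ∑ i, ‖x i‖ - (1/2) * ∑ i, r i ^ 2 ≤ re (((inner 𝕜 (∑ i, x i) e : 𝕜))) := by
    have hs : ∑ i, (‖x i‖ - r i ^ 2 / 2) ≤ ∑ i, re (((inner 𝕜 (x i) e : 𝕜))) :=
      Finset.sum_le_sum fun i _ => key i
    have hexp : ∑ i, (‖x i‖ - r i ^ 2 / 2) =
        ∑ i, ‖x i‖ - (1/2) * ∑ i, r i ^ 2 := by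
      rw [Finset.sum_sub_distrib, Finset.mul_sum]
      congr 1
      exact Finset.sum_congr rfl fun i _ => by ring
    linarith [hsum ▸ hs, hexp]
  have hcs : re (((inner 𝕜 (∑ i, x i) e : 𝕜))) ≤ ‖∑ i, x i‖ := by
    have := re_inner_le_norm (𝕜 := 𝕜) (∑ i, x i) e
    rwa [he, mul_one] at this
  refine ⟨⟨by linarith [norm_sum_le Finset.univ x], by linarith⟩, ?_, ?_⟩
  · intro heq
    have hv : ‖∑ i, x i‖ = ∑ i, ‖x i‖ - (1/2) * ∑ i, r i ^ 2 := by linarith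
    have hre' : re (((inner 𝕜 (∑ i, x i) e : 𝕜))) = ‖∑ i, x i‖ := by linarith
    refine ⟨by linarith [norm_nonneg (∑ i, x i)], ?_⟩
    have hz : ‖(∑ i, x i) - ((‖∑ i, x i‖ : ℝ) : 𝕜) • e‖ ^ 2 = 0 := by
      rw [norm_sub_sq (𝕜 := 𝕜), inner_smul_right, norm_smul, he, mul_one,
        RCLike.norm_ofReal, abs_of_nonneg (norm_nonneg _)]
      rw [RCLike.re_ofReal_mul, hre']
      ring
    have hz' : (∑ i, x i) - ((‖∑ i, x i‖ : ℝ) : 𝕜) • e = 0 := by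
      rwa [pow_eq_zero_iff (by norm_num), norm_eq_zero] at hz
    rw [sub_eq_zero] at hz'
    rw [hz', hv]
  · rintro ⟨h1, h2⟩
    have hnn : (0:ℝ) ≤ ∑ i, ‖x i‖ - (1/2) * ∑ i, r i ^ 2 := by linarith
    have : ‖∑ i, x i‖ = ∑ i, ‖x i‖ - (1/2) * ∑ i, r i ^ 2 := by
      rw [h2, norm_smul, he, mul_one, RCLike.norm_ofReal, abs_of_nonneg hnn]
    linarith
end

section
/- Let H be an inner product space over the real or complex numbers, let e ∈ H with ‖e‖ = 1, and let Mᵢ ≥ mᵢ > 0 for i ∈ {1, …, n}. If x₁, …, xₙ ∈ H satisfy ‖xᵢ − ((Mᵢ + mᵢ)/2) e‖ ≤ (1/2)(Mᵢ − mᵢ) for each i ∈ {1, …, n}, then 0 ≤ Σᵢ₌₁ⁿ ‖xᵢ‖ − ‖Σᵢ₌₁ⁿ xᵢ‖ ≤ (1/4) Σᵢ₌₁ⁿ (Mᵢ − mᵢ)²/(Mᵢ + mᵢ). Equality in the second inequality holds if and only if Σᵢ₌₁ⁿ ‖xᵢ‖ ≥ (1/4) Σᵢ₌₁ⁿ (Mᵢ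 − mᵢ)²/(Mᵢ + mᵢ) and Σᵢ₌₁ⁿ xᵢ = (Σᵢ₌₁ⁿ ‖xᵢ‖ − (1/4) Σᵢ₌₁ⁿ (Mᵢ − mᵢ)²/(Mᵢ + mᵢ)) e. -/
open RCLike Finset

theorem additive_reverse_triangle_mMi {𝕜 H : Type*} [RCLike 𝕜]
    [NormedAddCommGroup H] [InnerProductSpace 𝕜 H] {n : ℕ}
    (e : H) (he : ‖e‖ = 1) (m M : Fin n → ℝ)
    (hm : ∀ i, 0 < m i) (hmM : ∀ i, m i ≤ M i)
    (x : Fin n → H)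
    (h : ∀ i, ‖x i - (((M i + m i) / 2 : ℝ) : 𝕜) • e‖ ≤ (1 / 2) * (M i - m i)) :
    (0 ≤ ∑ i, ‖x i‖ - ‖∑ i, x i‖ ∧
      ∑ i, ‖x i‖ - ‖∑ i, x i‖ ≤ (1 / 4) * ∑ i, (M i - m i) ^ 2 / (M i + m i)) ∧
      (∑ i, ‖x i‖ - ‖∑ i, x i‖ = (1 / 4) * ∑ i, (M i - m i) ^ 2 / (M i + m i) ↔
        (1 / 4) * ∑ i, (M i - m i) ^ 2 / (M i + m i) ≤ ∑ i, ‖x i‖ ∧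
          ∑ i, x i =
            ((∑ i, ‖x i‖ - (1 / 4) * ∑ i, (M i - m i) ^ 2 / (M i + m i) : ℝ) : 𝕜) •
              e) := by
  have hpos : ∀ i, (0:ℝ) < M i + m i := fun i => by have := hm i; have := hmM i; linarith
  -- per index key inequality
  have key : ∀ i, ‖x i‖ - re ((inner 𝕜 e (x i) : 𝕜)) ≤ (M i - m i) ^ 2 / (M i + m i) / 4 := by
    intro i
    have h1 := h i
    have h2 : ‖x i - (((M i + m i) / 2 : ℝ) : 𝕜) • e‖ ^ 2 ≤ ((1/2) * (M i - m i)) ^ 2 :=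
      pow_le_pow_left₀ (norm_nonneg _) h1 2
    have h3 : ‖x i - (((M i + m i) / 2 : ℝ) : 𝕜) • e‖ ^ 2
        = ‖x i‖ ^ 2 - ((M i + m i)) * re ((inner 𝕜 e (x i) : 𝕜)) + ((M i + m i)/2) ^ 2 := by
      rw [@norm_sub_sq 𝕜, inner_smul_right, re_ofReal_mul, inner_re_symm, norm_smul,
        RCLike.norm_ofReal, he, mul_one,
        abs_of_nonneg (by have := hpos i; linarith : (0:ℝ) ≤ (M i + m i)/2)]
      ring
    have h4 : ‖x i‖ ^ 2 - (M i + m i) * re ((inner 𝕜 e (x i) : 𝕜)) + (M i * m i) ≤ 0 := by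
      nlinarith [h2, h3]
    rw [div_div, le_div_iff₀ (by have := hpos i; linarith : (0:ℝ) < (M i + m i) * 4)]
    nlinarith [h4, sq_nonneg (‖x i‖ - (M i + m i)/2), hpos i]
  have hsum : ∑ i, ‖x i‖ - re ((inner 𝕜 e (∑ i, x i) : 𝕜))
      ≤ (1 / 4) * ∑ i, (M i - m i) ^ 2 / (M i + m i) := by
    rw [inner_sum, map_sum]
    rw [Finset.mul_sum]
    rw [← Finset.sum_sub_distrib]
    apply Finset.sum_le_sum
    intro i _
    have := key i
    linarith
  have hcs : re ((inner 𝕜 e (∑ i, x i) : 𝕜)) ≤ ‖∑ i, x i‖ := by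
    calc re ((inner 𝕜 e (∑ i, x i) : 𝕜)) ≤ ‖e‖ * ‖∑ i, x i‖ := re_inner_le_norm _ _
    _ = ‖∑ i, x i‖ := by rw [he, one_mul]
  have hupper : ∑ i, ‖x i‖ - ‖∑ i, x i‖ ≤ (1 / 4) * ∑ i, (M i - m i) ^ 2 / (M i + m i) := by
    linarith
  have hlower : 0 ≤ ∑ i, ‖x i‖ - ‖∑ i, x i‖ :=
    sub_nonneg.2 (norm_sum_le _ _)
  refine ⟨⟨hlower, hupper⟩, ?_, ?_⟩
  · intro heq
    have hSle : (1 / 4) * ∑ i, (M i - m i) ^ 2 / (M i + m i) ≤ ∑ i, ‖x i‖ := by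
      have := norm_nonneg (∑ i, x i); linarith
    refine ⟨hSle, ?_⟩
    have hre : re ((inner 𝕜 e (∑ i, x i) : 𝕜)) = ‖∑ i, x i‖ := le_antisymm hcs (by linarith)
    have hz : ‖∑ i, x i - ((‖∑ i, x i‖ : ℝ) : 𝕜) • e‖ ^ 2 = 0 := by
      rw [@norm_sub_sq 𝕜, inner_smul_right, re_ofReal_mul, inner_re_symm, hre, norm_smul,
        RCLike.norm_ofReal, he, mul_one, abs_of_nonneg (norm_nonneg (∑ i, x i))]
      ring
    have hz2 : ∑ i, x i = ((‖∑ i, x i‖ : ℝ) : 𝕜) • e := by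
      have := pow_eq_zero_iff (n := 2) (by norm_num) |>.1 hz
      rw [norm_eq_zero, sub_eq_zero] at this
      exact this
    have hnorm : ‖∑ i, x i‖ = ∑ i, ‖x i‖ - (1 / 4) * ∑ i, (M i - m i) ^ 2 / (M i + m i) := by
      linarith
    rw [hz2, hnorm]
  · rintro ⟨hSle, hx⟩
    have : ‖∑ i, x i‖ = ∑ i, ‖x i‖ - (1 / 4) * ∑ i, (M i - m i) ^ 2 / (M i + m i) := by
      rw [hx, norm_smul, RCLike.norm_ofReal, he, mul_one,
        abs_of_nonneg (by linarith)]
    linarith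
end

section
/- Let H be an inner product space over the real or complex numbers, let a ∈ H with ‖a‖ = 1, and let r ∈ (0,1). If x, y ∈ H satisfy ‖x − a‖ ≤ r and ‖y − a‖ ≤ r, then 0 ≤ (‖x‖ ‖y‖ − Re⟨x, y⟩) / (‖x‖ + ‖y‖)² ≤ (1/2) r². -/
set_option maxHeartbeats 1000000


open RCLike

theorem reverse_schwarz_ball {𝕜 H : Type*} [RCLike 𝕜] [NormedAddCommGroup H]
    [InnerProductSpace 𝕜 H] (a : H) (ha : ‖a‖ = 1) (r : ℝ)
    (hr : r ∈ Set.Ioo (0 : ℝ) 1) (x y : H)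
    (hx : ‖x - a‖ ≤ r) (hy : ‖y - a‖ ≤ r) :
    0 ≤ (‖x‖ * ‖y‖ - re (inner 𝕜 x y : 𝕜)) / (‖x‖ + ‖y‖) ^ 2 ∧
      (‖x‖ * ‖y‖ - re (inner 𝕜 x y : 𝕜)) / (‖x‖ + ‖y‖) ^ 2 ≤ (1 / 2) * r ^ 2 := by
  obtain ⟨hr0, hr1⟩ := hr
  set p := ‖x‖ with hpdef
  set q := ‖y‖ with hqdef
  set c := re (inner 𝕜 x y : 𝕜) with hcdef
  set A := re (inner 𝕜 x a : 𝕜) with hAdef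
  set B := re (inner 𝕜 y a : 𝕜) with hBdef
  have hs1 : (0:ℝ) ≤ 1 - r^2 := by nlinarith
  set s := Real.sqrt (1 - r^2) with hsdef
  have hs2 : s^2 = 1 - r^2 := Real.sq_sqrt hs1
  have hs0 : 0 ≤ s := Real.sqrt_nonneg _
  have hp0 : 1 - r ≤ p := by
    have h1 : ‖a‖ - ‖x‖ ≤ ‖a - x‖ := norm_sub_norm_le a x
    rw [norm_sub_rev] at h1
    rw [ha] at h1; linarith
  have hq0 : 1 - r ≤ q := by
    have h1 : ‖a‖ - ‖y‖ ≤ ‖a - y‖ := norm_sub_norm_le a y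
    rw [norm_sub_rev] at h1
    rw [ha] at h1; linarith
  have hpp : (0:ℝ) < p := by linarith
  have hqq : (0:ℝ) < q := by linarith
  have hx2 : ‖x - a‖^2 ≤ r^2 := by
    apply pow_le_pow_left₀ (norm_nonneg _) hx
  have hy2 : ‖y - a‖^2 ≤ r^2 := by
    apply pow_le_pow_left₀ (norm_nonneg _) hy
  have hxa : ‖x - a‖^2 = p^2 - 2 * A + 1 := by
    rw [@norm_sub_sq 𝕜, ha]; ring
  have hya : ‖y - a‖^2 = q^2 - 2 * B + 1 := by
    rw [@norm_sub_sq 𝕜, ha]; ring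
  have hA1 : p^2 + 1 - r^2 ≤ 2 * A := by nlinarith
  have hB1 : q^2 + 1 - r^2 ≤ 2 * B := by nlinarith
  have hAs : p * s ≤ A := by nlinarith [sq_nonneg (p - s)]
  have hBs : q * s ≤ B := by nlinarith [sq_nonneg (q - s)]
  have hA0 : 0 ≤ A := le_trans (by positivity) hAs
  have hB0 : 0 ≤ B := le_trans (by positivity) hBs
  -- Cauchy-Schwarz on the components orthogonal to a
  have hexp : re (inner 𝕜 (x - (A:𝕜) • a) (y - (B:𝕜) • a) : 𝕜) = c - A * B := by
    simp only [inner_sub_left, inner_sub_right, inner_smul_left, inner_smul_right, map_sub,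
      map_mul, conj_ofReal, inner_self_eq_norm_sq_to_K, ha]
    simp [mul_comm, mul_re, inner_re_symm (𝕜 := 𝕜) a x, inner_re_symm (𝕜 := 𝕜) a y]
    rw [← hAdef, ← hBdef, ← hcdef]; ring
  have hnx : ‖x - (A:𝕜) • a‖^2 = p^2 - A^2 := by
    rw [@norm_sub_sq 𝕜, inner_smul_right, norm_smul, RCLike.norm_ofReal, ha]
    simp [abs_of_nonneg hA0, mul_re]
    ring
  have hny : ‖y - (B:𝕜) • a‖^2 = q^2 - B^2 := by
    rw [@norm_sub_sq 𝕜, inner_smul_right, norm_smul, RCLike.norm_ofReal, ha]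
    simp [abs_of_nonneg hB0, mul_re]
    ring
  have hcs : |c - A * B| ≤ ‖x - (A:𝕜) • a‖ * ‖y - (B:𝕜) • a‖ := by
    rw [← hexp]
    exact (abs_re_le_norm _).trans (norm_inner_le_norm _ _)
  have hcs2 : (c - A * B)^2 ≤ (p^2 - A^2) * (q^2 - B^2) := by
    rw [← hnx, ← hny]
    calc (c - A * B)^2 = |c - A*B|^2 := (sq_abs _).symm
    _ ≤ (‖x - (A:𝕜) • a‖ * ‖y - (B:𝕜) • a‖)^2 := by
        apply pow_le_pow_left₀ (abs_nonneg _) hcs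
    _ = ‖x - (A:𝕜) • a‖^2 * ‖y - (B:𝕜) • a‖^2 := by ring
  have hAp : A ≤ p := by
    calc A ≤ ‖(inner 𝕜 x a : 𝕜)‖ := abs_re_le_norm _ |>.trans' (le_abs_self _)
    _ ≤ p * ‖a‖ := norm_inner_le_norm _ _
    _ = p := by rw [ha]; ring
  have hBq : B ≤ q := by
    calc B ≤ ‖(inner 𝕜 y a : 𝕜)‖ := abs_re_le_norm _ |>.trans' (le_abs_self _)
    _ ≤ q * ‖a‖ := norm_inner_le_norm _ _
    _ = q := by rw [ha]; ring
  have hpa2 : p^2 - A^2 ≤ p^2 * r^2 := by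
    have h' : (p*s)^2 ≤ A^2 := pow_le_pow_left₀ (by positivity) hAs 2
    have h'' : (p*s)^2 = p^2 - p^2 * r^2 := by rw [mul_pow, hs2]; ring
    linarith
  have hqb2 : q^2 - B^2 ≤ q^2 * r^2 := by
    have h' : (q*s)^2 ≤ B^2 := pow_le_pow_left₀ (by positivity) hBs 2
    have h'' : (q*s)^2 = q^2 - q^2 * r^2 := by rw [mul_pow, hs2]; ring
    linarith
  have hqb0 : (0:ℝ) ≤ q^2 - B^2 := sub_nonneg.2 (pow_le_pow_left₀ hB0 hBq 2)
  have h1 : (c - A * B)^2 ≤ (p*q*r^2)^2 := by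
    calc (c - A * B)^2 ≤ (p^2 - A^2) * (q^2 - B^2) := hcs2
    _ ≤ (p^2 * r^2) * (q^2 * r^2) := mul_le_mul hpa2 hqb2 hqb0 (by positivity)
    _ = (p*q*r^2)^2 := by ring
  have hm0 : (0:ℝ) ≤ p*q*r^2 := by positivity
  have h2 : -(p*q*r^2) ≤ c - A * B := (abs_le_of_sq_le_sq' h1 hm0).1
  have h3 : (p*s) * (q*s) ≤ A * B := mul_le_mul hAs hBs (by positivity) hA0
  have h3' : p * q * (1 - r^2) ≤ A * B := by
    have e : (p*s) * (q*s) = p * q * (1 - r^2) := by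
      rw [← hs2]; ring
    linarith
  have hkey : p * q * (1 - 2 * r^2) ≤ c := by linarith
  have hcpq : c ≤ p * q := re_inner_le_norm x y
  have hD : (0:ℝ) < (p + q)^2 := by positivity
  constructor
  · apply div_nonneg (by linarith) (le_of_lt hD)
  · rw [div_le_iff₀ hD]
    have t : (0:ℝ) ≤ r^2 * (p - q)^2 := by positivity
    have e : 1/2 * r^2 * (p+q)^2 - 2 * r^2 * (p*q) = 1/2 * (r^2 * (p-q)^2) := by ring
    linarith
end

section
/- Let H be an inner product space over ℝ or ℂ of dimension at least 2 and let a ∈ H with ‖a‖ = 1. Suppose C > 0 is a constant such that for every r ∈ (0,1) and all x, y ∈ H with ‖x − a‖ ≤ r and ‖y − a‖ ≤ r, one has (‖x‖ ‖y‖ − Re⟨x, y⟩) / (‖x‖ + ‖y‖)² ≤ C r². Then C ≥ 1/2. (Thus the constant 1/2 in the reverse Schwarz inequality for closed balls centered at a unit vector is best possible.) -/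
open RCLike

theorem reverse_schwarz_ball_sharp {𝕜 H : Type*} [RCLike 𝕜] [NormedAddCommGroup H]
    [InnerProductSpace 𝕜 H] (hdim : 2 ≤ Module.rank 𝕜 H)
    (a : H) (ha : ‖a‖ = 1) (C : ℝ) (hC : 0 < C)
    (h : ∀ r ∈ Set.Ioo (0 : ℝ) 1, ∀ x y : H, ‖x - a‖ ≤ r → ‖y - a‖ ≤ r →
      (‖x‖ * ‖y‖ - re (inner 𝕜 x y : 𝕜)) / (‖x‖ + ‖y‖) ^ 2 ≤ C * r ^ 2) :
    1 / 2 ≤ C := by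
  -- find unit vector e orthogonal to a
  have hK : (𝕜 ∙ a) ≠ ⊤ := by
    intro h'
    have h1 : Module.rank 𝕜 (𝕜 ∙ a) ≤ 1 := by
      simpa using rank_span_le (R := 𝕜) (M := H) {a}
    rw [h', rank_top] at h1
    exact absurd (hdim.trans h1) (by norm_num)
  haveI : Module.Finite 𝕜 (𝕜 ∙ a) := by
    apply FiniteDimensional.span_of_finite
    exact Set.finite_singleton a
  have hbot : (𝕜 ∙ a)ᗮ ≠ ⊥ := fun hb => hK (Submodule.orthogonal_eq_bot_iff.mp hb)
  obtain ⟨v, hv, hv0⟩ := Submodule.ne_bot_iff _ |>.mp hbot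
  set e : H := ((‖v‖⁻¹ : ℝ) : 𝕜) • v with he
  have hvnorm : (0:ℝ) < ‖v‖ := norm_pos_iff.mpr hv0
  have hene : ‖e‖ = 1 := by
    rw [he, norm_smul, RCLike.norm_ofReal, abs_of_nonneg (by positivity)]
    field_simp
  have heK : e ∈ (𝕜 ∙ a)ᗮ := Submodule.smul_mem _ _ hv
  have hae : (inner 𝕜 a e : 𝕜) = 0 :=
    (Submodule.mem_orthogonal _ _).mp heK a (Submodule.mem_span_singleton_self a)
  have hea : (inner 𝕜 e a : 𝕜) = 0 := inner_eq_zero_symm.mp hae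
  -- key inequality: for all r ∈ (0,1), 1/(2*(1+r^2)) ≤ C
  have key : ∀ r ∈ Set.Ioo (0:ℝ) 1, 1 / (2 * (1 + r^2)) ≤ C := by
    intro r hr
    obtain ⟨hr0, hr1⟩ := hr
    set x : H := a + ((r:ℝ):𝕜) • e with hx
    set y : H := a - ((r:ℝ):𝕜) • e with hy
    have hre : ‖((r:ℝ):𝕜) • e‖ = r := by
      rw [norm_smul, RCLike.norm_ofReal, hene, abs_of_pos hr0, mul_one]
    have hxa : ‖x - a‖ ≤ r := by rw [hx]; simp [hre]
    have hya : ‖y - a‖ ≤ r := by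
      rw [hy]
      have : a - ((r:ℝ):𝕜) • e - a = -(((r:ℝ):𝕜) • e) := by abel
      rw [this, norm_neg, hre]
    have hinner : re (inner 𝕜 x y : 𝕜) = 1 - r ^ 2 := by
      rw [hx, hy]
      simp [inner_add_left, inner_sub_right, inner_smul_left, inner_smul_right,
        hae, hea, inner_self_eq_norm_sq_to_K, ha, hene, conj_ofReal]
      ring_nf
    have hxn : ‖x‖ = Real.sqrt (1 + r ^ 2) := by
      have h2 : ‖x‖ ^ 2 = 1 + r ^ 2 := by
        rw [hx, @norm_add_sq 𝕜]
        simp [inner_smul_right, hae, hre, ha]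
      rw [← h2, Real.sqrt_sq (norm_nonneg _)]
    have hyn : ‖y‖ = Real.sqrt (1 + r ^ 2) := by
      have h2 : ‖y‖ ^ 2 = 1 + r ^ 2 := by
        rw [hy, @norm_sub_sq 𝕜]
        simp [inner_smul_right, hae, hre, ha]
      rw [← h2, Real.sqrt_sq (norm_nonneg _)]
    have hs : Real.sqrt (1 + r ^ 2) * Real.sqrt (1 + r ^ 2) = 1 + r ^ 2 :=
      Real.mul_self_sqrt (by positivity)
    have := h r ⟨hr0, hr1⟩ x y hxa hya
    rw [hinner, hxn, hyn] at this
    have hval : (Real.sqrt (1 + r ^ 2) * Real.sqrt (1 + r ^ 2) - (1 - r ^ 2)) /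
        (Real.sqrt (1 + r ^ 2) + Real.sqrt (1 + r ^ 2)) ^ 2
        = r ^ 2 / (2 * (1 + r ^ 2)) := by
      have h4 : (Real.sqrt (1 + r ^ 2) + Real.sqrt (1 + r ^ 2)) ^ 2 = 4 * (1 + r ^ 2) := by
        ring_nf
        rw [Real.sq_sqrt (by positivity : (0:ℝ) ≤ 1 + r ^ 2)]
        ring
      rw [h4, hs]
      field_simp
      ring
    rw [hval] at this
    have hr2 : (0:ℝ) < r ^ 2 := by positivity
    have h1r : (0:ℝ) < 1 + r ^ 2 := by positivity
    rw [div_le_iff₀ (by positivity)]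
    rw [div_le_iff₀ (by positivity)] at this
    nlinarith [this, mul_pos hr2 h1r]
  by_contra hc
  push_neg at hc
  obtain ⟨ε, hε⟩ : ∃ ε : ℝ, ε = 1 / (2 * C) - 1 := ⟨_, rfl⟩
  have hC2 : (0:ℝ) < ε := by
    rw [hε, sub_pos, lt_div_iff₀ (by positivity)]
    linarith
  obtain ⟨r, hrdef⟩ : ∃ r : ℝ, r = min (1/2 : ℝ) (Real.sqrt ε / 2) := ⟨_, rfl⟩
  have hr0 : 0 < r := hrdef ▸ lt_min (by norm_num) (by positivity)
  have hr1 : r < 1 := hrdef ▸ lt_of_le_of_lt (min_le_left _ _) (by norm_num)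
  have hrε : r ^ 2 < ε := by
    have h1 : r ≤ Real.sqrt ε / 2 := hrdef ▸ min_le_right _ _
    have h2 : r ^ 2 ≤ (Real.sqrt ε / 2) ^ 2 := pow_le_pow_left₀ hr0.le h1 2
    have h3 : (Real.sqrt ε / 2) ^ 2 = ε / 4 := by
      rw [div_pow, Real.sq_sqrt hC2.le]; norm_num
    linarith
  have hfin := key r ⟨hr0, hr1⟩
  rw [div_le_iff₀ (by positivity)] at hfin
  have h5 : r ^ 2 < 1 / (2 * C) - 1 := hε ▸ hrε
  have h6 : (r ^ 2 + 1) * (2 * C) < (1 / (2 * C)) * (2 * C) :=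
    mul_lt_mul_of_pos_right (by linarith) (by positivity)
  have h7 : (1 / (2 * C)) * (2 * C) = 1 := by field_simp
  nlinarith [hfin, h6, h7]
end

section
/- Let H be an inner product space over the real or complex numbers, let a ∈ H with ‖a‖ = 1, and let M ≥ m > 0. If x, y ∈ H satisfy Re⟨M a − x, x − m a⟩ ≥ 0 and Re⟨M a − y, y − m a⟩ ≥ 0, then 0 ≤ (‖x‖ ‖y‖ − Re⟨x, y⟩) / (‖x‖ + ‖y‖)² ≤ (1/2) ((M − m)/(M + m))². -/
open RCLike

theorem reverse_schwarz_mM {𝕜 H : Type*} [RCLike 𝕜] [NormedAddCommGroup H]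
    [InnerProductSpace 𝕜 H] (a : H) (ha : ‖a‖ = 1) (m M : ℝ)
    (hm : 0 < m) (hmM : m ≤ M) (x y : H)
    (hx : 0 ≤ re (inner 𝕜 ((M : 𝕜) • a - x) (x - (m : 𝕜) • a) : 𝕜))
    (hy : 0 ≤ re (inner 𝕜 ((M : 𝕜) • a - y) (y - (m : 𝕜) • a) : 𝕜)) :
    0 ≤ (‖x‖ * ‖y‖ - re (inner 𝕜 x y : 𝕜)) / (‖x‖ + ‖y‖) ^ 2 ∧
      (‖x‖ * ‖y‖ - re (inner 𝕜 x y : 𝕜)) / (‖x‖ + ‖y‖) ^ 2 ≤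
        (1 / 2) * ((M - m) / (M + m)) ^ 2 := by
  have hM : 0 < M := lt_of_lt_of_le hm hmM
  have haa : re (inner 𝕜 a a : 𝕜) = 1 := by
    rw [inner_self_eq_norm_sq, ha]; norm_num
  -- expand the hypotheses
  have key : ∀ z : H, 0 ≤ re (inner 𝕜 ((M : 𝕜) • a - z) (z - (m : 𝕜) • a) : 𝕜) →
      ‖z‖ ^ 2 + m * M ≤ (M + m) * re (inner 𝕜 z a : 𝕜) := by
    intro z hz
    have hexp : re (inner 𝕜 ((M : 𝕜) • a - z) (z - (m : 𝕜) • a) : 𝕜)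
        = (M + m) * re (inner 𝕜 z a : 𝕜) - m * M - ‖z‖ ^ 2 := by
      rw [inner_sub_left, inner_sub_right, inner_sub_right, inner_smul_left,
        inner_smul_left, inner_smul_right, inner_smul_right, conj_ofReal]
      simp only [map_sub, ← ofReal_mul, re_ofReal_mul, inner_self_eq_norm_sq,
        inner_re_symm a z]
      rw [ha]
      ring
    rw [hexp] at hz
    linarith
  have hx' := key x hx
  have hy' := key y hy
  -- positivity of norms
  have hxa : re (inner 𝕜 x a : 𝕜) ≤ ‖x‖ := by
    have := re_inner_le_norm (𝕜 := 𝕜) x a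
    rwa [ha, mul_one] at this
  have hya : re (inner 𝕜 y a : 𝕜) ≤ ‖y‖ := by
    have := re_inner_le_norm (𝕜 := 𝕜) y a
    rwa [ha, mul_one] at this
  have hx0 : 0 < ‖x‖ := by
    by_contra h
    push_neg at h
    have : ‖x‖ = 0 := le_antisymm h (norm_nonneg x)
    have hx00 : x = 0 := norm_eq_zero.mp this
    rw [hx00] at hx'
    simp at hx'
    nlinarith
  have hy0 : 0 < ‖y‖ := by
    by_contra h
    push_neg at h
    have : ‖y‖ = 0 := le_antisymm h (norm_nonneg y)
    have hy00 : y = 0 := norm_eq_zero.mp this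
    rw [hy00] at hy'
    simp at hy'
    nlinarith
  have hS : 0 < ‖x‖ + ‖y‖ := by linarith
  -- lower bound
  have hlow : re (inner 𝕜 x y : 𝕜) ≤ ‖x‖ * ‖y‖ := re_inner_le_norm x y
  constructor
  · apply div_nonneg (by linarith) (by positivity)
  -- upper bound
  have hsq : 0 < Real.sqrt (m * M) := Real.sqrt_pos.mpr (by positivity)
  have hsq2 : Real.sqrt (m * M) ^ 2 = m * M := Real.sq_sqrt (by positivity)
  have hx2 : 2 * Real.sqrt (m * M) * ‖x‖ ≤ (M + m) * re (inner 𝕜 x a : 𝕜) := by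
    nlinarith [sq_nonneg (‖x‖ - Real.sqrt (m * M))]
  have hy2 : 2 * Real.sqrt (m * M) * ‖y‖ ≤ (M + m) * re (inner 𝕜 y a : 𝕜) := by
    nlinarith [sq_nonneg (‖y‖ - Real.sqrt (m * M))]
  have hxya : re (inner 𝕜 (x + y) a : 𝕜) ≤ ‖x + y‖ := by
    have := re_inner_le_norm (𝕜 := 𝕜) (x + y) a
    rwa [ha, mul_one] at this
  have hadd : re (inner 𝕜 (x + y) a : 𝕜) = re (inner 𝕜 x a : 𝕜) + re (inner 𝕜 y a : 𝕜) := by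
    rw [inner_add_left, map_add]
  have hmain : 2 * Real.sqrt (m * M) * (‖x‖ + ‖y‖) ≤ (M + m) * ‖x + y‖ := by
    nlinarith
  have hmain2 : 4 * (m * M) * (‖x‖ + ‖y‖) ^ 2 ≤ (M + m) ^ 2 * ‖x + y‖ ^ 2 := by
    nlinarith [norm_nonneg (x + y), mul_pos hsq hS]
  have hexp2 : ‖x + y‖ ^ 2 = ‖x‖ ^ 2 + 2 * re (inner 𝕜 x y : 𝕜) + ‖y‖ ^ 2 :=
    norm_add_sq x y
  rw [hexp2] at hmain2
  have hMm : 0 < (M + m) ^ 2 := by positivity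
  have hD : (‖x‖ * ‖y‖ - re (inner 𝕜 x y : 𝕜)) * (2 * (M + m) ^ 2) ≤
      (M - m) ^ 2 * (‖x‖ + ‖y‖) ^ 2 := by
    have hid : (M - m) ^ 2 * (‖x‖ + ‖y‖) ^ 2 -
        (‖x‖ * ‖y‖ - re (inner 𝕜 x y : 𝕜)) * (2 * (M + m) ^ 2) =
        (M + m) ^ 2 * (‖x‖ ^ 2 + 2 * re (inner 𝕜 x y : 𝕜) + ‖y‖ ^ 2) -
          4 * (m * M) * (‖x‖ + ‖y‖) ^ 2 := by ring
    linarith [hmain2, hid]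
  have h2 : (1 / 2 : ℝ) * ((M - m) / (M + m)) ^ 2 = (M - m) ^ 2 / (2 * (M + m) ^ 2) := by
    rw [div_pow]
    field_simp
  rw [h2, div_le_div_iff₀ (by positivity) (by positivity)]
  linarith
end

section
/- Let H be a Hilbert space over ℝ or ℂ, let [a,b] ⊂ ℝ be a compact interval, and let η : [a,b] → [0,∞) be Lebesgue integrable with ∫ₐᵇ η(t) dt = 1. Let g : [a,b] → H be Bochner measurable with ∫ₐᵇ η(t) ‖g(t)‖² dt = 1, let ρ ∈ (0,1), and let f₁, …, fₙ : [a,b] → H be Bochner measurable with ∫ₐᵇ η(t) ‖fᵢ(t)‖² dt < ∞ for each i. If ‖fᵢ(t) − g(t)‖ ≤ ρ for almost every t ∈ [a,b] and each i ∈ {1, …, n}, then √(1 − ρ²) · Σᵢ₌₁ⁿ (∫ₐᵇ η(t) ‖fᵢ(t)‖² dt)^{1/2} ≤ (∫ₐᵇ η(t) ‖Σᵢ₌₁ⁿ fᵢ(t)‖² dt)^{1/2}. -/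
open MeasureTheory Finset

theorem reverse_triangle_vector_valued_integral {𝕜 H : Type*} [RCLike 𝕜]
    [NormedAddCommGroup H] [InnerProductSpace 𝕜 H] [CompleteSpace H]
    {a b : ℝ} (hab : a ≤ b) (η : ℝ → ℝ)
    (hη_int : IntegrableOn η (Set.Icc a b))
    (hη_nonneg : ∀ t ∈ Set.Icc a b, 0 ≤ η t)
    (hη_one : ∫ t in Set.Icc a b, η t = 1)
    (g : ℝ → H) (hg_meas : AEStronglyMeasurable g (volume.restrict (Set.Icc a b)))
    (hg_int : IntegrableOn (fun t => η t * ‖g t‖ ^ 2) (Set.Icc a b))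
    (hg_one : ∫ t in Set.Icc a b, η t * ‖g t‖ ^ 2 = 1)
    {n : ℕ} (f : Fin n → ℝ → H)
    (hf_meas : ∀ i, AEStronglyMeasurable (f i) (volume.restrict (Set.Icc a b)))
    (hf_int : ∀ i, IntegrableOn (fun t => η t * ‖f i t‖ ^ 2) (Set.Icc a b))
    (ρ : ℝ) (hρ : ρ ∈ Set.Ioo (0 : ℝ) 1)
    (h : ∀ i, ∀ᵐ t ∂(volume.restrict (Set.Icc a b)), ‖f i t - g t‖ ≤ ρ) :
    Real.sqrt (1 - ρ ^ 2) *
        ∑ i, Real.sqrt (∫ t in Set.Icc a b, η t * ‖f i t‖ ^ 2) ≤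
      Real.sqrt (∫ t in Set.Icc a b, η t * ‖∑ i, f i t‖ ^ 2) := by
  set μ := volume.restrict (Set.Icc a b) with hμdef
  have hc : (0:ℝ) < 1 - ρ ^ 2 := by nlinarith [hρ.1, hρ.2]
  have hηm : AEStronglyMeasurable η μ := hη_int.aestronglyMeasurable
  have hη0 : ∀ᵐ t ∂μ, 0 ≤ η t := ae_restrict_of_forall_mem measurableSet_Icc hη_nonneg
  set F : ℝ → H := fun t => ∑ i, f i t with hF
  have hFm : AEStronglyMeasurable F μ :=
    (Finset.aestronglyMeasurable_sum univ (fun i _ => hf_meas i)).congr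
      (ae_of_all _ (fun t => by simp [hF, Finset.sum_apply]))
  -- integrability of η‖F‖²
  have hF2 : Integrable (fun t => η t * ‖F t‖ ^ 2) μ := by
    refine Integrable.mono'
      ((integrable_finset_sum (univ : Finset (Fin n)) (fun i _ => hf_int i)).const_mul (n : ℝ)) ?_ ?_
    · exact hηm.mul (by simpa [pow_two, Pi.mul_def] using hFm.norm.mul hFm.norm)
    · filter_upwards [hη0] with t ht0
      have h1 : ‖F t‖ ≤ ∑ i, ‖f i t‖ := norm_sum_le _ _
      have h2 : (∑ i, ‖f i t‖) ^ 2 ≤ (n : ℝ) * ∑ i, ‖f i t‖ ^ 2 := by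
        simpa using sq_sum_le_card_mul_sum_sq (s := (univ : Finset (Fin n)))
          (f := fun i => ‖f i t‖)
      have h3 : ‖F t‖ ^ 2 ≤ (n : ℝ) * ∑ i, ‖f i t‖ ^ 2 := by
        nlinarith [norm_nonneg (F t), Finset.sum_nonneg
          (fun i (_ : i ∈ univ) => norm_nonneg (f i t))]
      rw [Real.norm_eq_abs, abs_of_nonneg (by positivity)]
      calc η t * ‖F t‖ ^ 2 ≤ η t * ((n : ℝ) * ∑ i, ‖f i t‖ ^ 2) :=
            mul_le_mul_of_nonneg_left h3 ht0
        _ = (n : ℝ) * ∑ i, η t * ‖f i t‖ ^ 2 := by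
            have hms : ∑ i, η t * ‖f i t‖ ^ 2 = η t * ∑ i, ‖f i t‖ ^ 2 :=
              (Finset.mul_sum _ _ _).symm
            rw [hms]; ring
  -- integrability of η·re⟪fᵢ, g⟫
  have hir : ∀ i, Integrable
      (fun t => η t * RCLike.re (inner 𝕜 (f i t) (g t))) μ := by
    intro i
    refine Integrable.mono' (((hf_int i).add hg_int).const_mul 2⁻¹) ?_ ?_
    · exact hηm.mul (RCLike.continuous_re.comp_aestronglyMeasurable
        ((hf_meas i).inner hg_meas))
    · filter_upwards [hη0] with t ht0
      have h1 : |RCLike.re (inner 𝕜 (f i t) (g t))| ≤ ‖f i t‖ * ‖g t‖ :=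
        (RCLike.abs_re_le_norm _).trans (norm_inner_le_norm _ _)
      have h2 : ‖f i t‖ * ‖g t‖ ≤ 2⁻¹ * (‖f i t‖ ^ 2 + ‖g t‖ ^ 2) := by
        nlinarith [sq_nonneg (‖f i t‖ - ‖g t‖)]
      rw [Real.norm_eq_abs, abs_mul, abs_of_nonneg ht0]
      calc η t * |RCLike.re (inner 𝕜 (f i t) (g t))|
          ≤ η t * (2⁻¹ * (‖f i t‖ ^ 2 + ‖g t‖ ^ 2)) :=
            mul_le_mul_of_nonneg_left (h1.trans h2) ht0
        _ = 2⁻¹ * (η t * ‖f i t‖ ^ 2 + η t * ‖g t‖ ^ 2) := by ring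
  -- integrability of η‖F‖‖g‖
  have hFg : Integrable (fun t => η t * (‖F t‖ * ‖g t‖)) μ := by
    refine Integrable.mono' ((hF2.add hg_int).const_mul 2⁻¹) ?_ ?_
    · exact hηm.mul (hFm.norm.mul hg_meas.norm)
    · filter_upwards [hη0] with t ht0
      have h2 : ‖F t‖ * ‖g t‖ ≤ 2⁻¹ * (‖F t‖ ^ 2 + ‖g t‖ ^ 2) := by
        nlinarith [sq_nonneg (‖F t‖ - ‖g t‖)]
      rw [Real.norm_eq_abs, abs_of_nonneg (by positivity)]
      calc η t * (‖F t‖ * ‖g t‖) ≤ η t * (2⁻¹ * (‖F t‖ ^ 2 + ‖g t‖ ^ 2)) :=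
            mul_le_mul_of_nonneg_left h2 ht0
        _ = 2⁻¹ * (η t * ‖F t‖ ^ 2 + η t * ‖g t‖ ^ 2) := by ring
  set A : Fin n → ℝ := fun i => ∫ t, η t * ‖f i t‖ ^ 2 ∂μ with hA
  have hA0 : ∀ i, 0 ≤ A i := fun i =>
    integral_nonneg_of_ae (by filter_upwards [hη0] with t ht0; positivity)
  set r : Fin n → ℝ := fun i => ∫ t, η t * RCLike.re (inner 𝕜 (f i t) (g t)) ∂μ with hr
  -- key estimate for each i
  have key : ∀ i, Real.sqrt (1 - ρ ^ 2) * Real.sqrt (A i) ≤ r i := by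
    intro i
    -- distance estimate
    have hint_d : Integrable (fun t => η t * ‖f i t - g t‖ ^ 2) μ := by
      refine Integrable.mono' (hη_int.const_mul (ρ ^ 2)) ?_ ?_
      · exact hηm.mul (by simpa [pow_two, Pi.mul_def] using
          ((hf_meas i).sub hg_meas).norm.mul ((hf_meas i).sub hg_meas).norm)
      · filter_upwards [hη0, h i] with t ht0 htρ
        have : ‖f i t - g t‖ ^ 2 ≤ ρ ^ 2 := by
          nlinarith [norm_nonneg (f i t - g t)]
        rw [Real.norm_eq_abs, abs_of_nonneg (by positivity)]
        calc η t * ‖f i t - g t‖ ^ 2 ≤ η t * ρ ^ 2 := mul_le_mul_of_nonneg_left this ht0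
          _ = ρ ^ 2 * η t := by ring
    have hdle : ∫ t, η t * ‖f i t - g t‖ ^ 2 ∂μ ≤ ρ ^ 2 := by
      calc ∫ t, η t * ‖f i t - g t‖ ^ 2 ∂μ ≤ ∫ t, ρ ^ 2 * η t ∂μ := by
            refine integral_mono_ae hint_d (hη_int.const_mul _) ?_
            filter_upwards [hη0, h i] with t ht0 htρ
            have : ‖f i t - g t‖ ^ 2 ≤ ρ ^ 2 := by
              nlinarith [norm_nonneg (f i t - g t)]
            calc η t * ‖f i t - g t‖ ^ 2 ≤ η t * ρ ^ 2 :=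
                  mul_le_mul_of_nonneg_left this ht0
              _ = ρ ^ 2 * η t := by ring
        _ = ρ ^ 2 := by rw [integral_const_mul, hη_one]; ring
    have hexp : ∫ t, η t * ‖f i t - g t‖ ^ 2 ∂μ = A i - 2 * r i + 1 := by
      have hfun : (fun t => η t * ‖f i t - g t‖ ^ 2) =
          fun t => (η t * ‖f i t‖ ^ 2
            - 2 * (η t * RCLike.re (inner 𝕜 (f i t) (g t))))
            + η t * ‖g t‖ ^ 2 := by
        funext t
        rw [norm_sub_sq (𝕜 := 𝕜)]
        ring
      have hsub : Integrable (fun t => η t * ‖f i t‖ ^ 2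
          - 2 * (η t * RCLike.re (inner 𝕜 (f i t) (g t)))) μ :=
        (hf_int i).sub ((hir i).const_mul 2)
      rw [hfun, integral_add hsub hg_int,
        integral_sub (hf_int i) ((hir i).const_mul 2), integral_const_mul, hg_one]
    have hri : (A i + (1 - ρ ^ 2)) / 2 ≤ r i := by linarith [hexp ▸ hdle]
    nlinarith [sq_nonneg (Real.sqrt (A i) - Real.sqrt (1 - ρ ^ 2)),
      Real.sq_sqrt (hA0 i), Real.sq_sqrt hc.le,
      Real.sqrt_nonneg (A i), Real.sqrt_nonneg (1 - ρ ^ 2)]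
  -- sum of inner products
  have hsum : ∫ t, η t * RCLike.re (inner 𝕜 (F t) (g t)) ∂μ = ∑ i, r i := by
    have hfun : (fun t => η t * RCLike.re (inner 𝕜 (F t) (g t))) =
        fun t => ∑ i, η t * RCLike.re (inner 𝕜 (f i t) (g t)) := by
      funext t
      rw [hF]
      simp only [sum_inner, map_sum, Finset.mul_sum]
    rw [hfun, integral_finset_sum _ (fun i _ => hir i)]
  -- Cauchy–Schwarz step
  set Z : ℝ := ∫ t, η t * (‖F t‖ * ‖g t‖) ∂μ with hZ
  set X : ℝ := ∫ t, η t * ‖F t‖ ^ 2 ∂μ with hX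
  have hZ0 : 0 ≤ Z :=
    integral_nonneg_of_ae (by filter_upwards [hη0] with t ht0; positivity)
  have hSZ : ∫ t, η t * RCLike.re (inner 𝕜 (F t) (g t)) ∂μ ≤ Z := by
    refine integral_mono_ae (by
      have hfm : AEStronglyMeasurable
          (fun t => η t * RCLike.re (inner 𝕜 (F t) (g t))) μ :=
        hηm.mul (RCLike.continuous_re.comp_aestronglyMeasurable (hFm.inner hg_meas))
      refine Integrable.mono' hFg hfm ?_
      filter_upwards [hη0] with t ht0
      have h1 : |RCLike.re (inner 𝕜 (F t) (g t))| ≤ ‖F t‖ * ‖g t‖ :=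
        (RCLike.abs_re_le_norm _).trans (norm_inner_le_norm _ _)
      rw [Real.norm_eq_abs, abs_mul, abs_of_nonneg ht0]
      exact mul_le_mul_of_nonneg_left h1 ht0) hFg ?_
    filter_upwards [hη0] with t ht0
    exact mul_le_mul_of_nonneg_left (re_inner_le_norm _ _) ht0
  have hcs : Z ≤ Real.sqrt X := by
    have hq : 0 ≤ ∫ t, η t * (‖F t‖ - Z * ‖g t‖) ^ 2 ∂μ :=
      integral_nonneg_of_ae (by filter_upwards [hη0] with t ht0; positivity)
    have hqe : ∫ t, η t * (‖F t‖ - Z * ‖g t‖) ^ 2 ∂μ = X - 2 * Z * Z + Z ^ 2 * 1 := by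
      have hfun : (fun t => η t * (‖F t‖ - Z * ‖g t‖) ^ 2) =
          fun t => (η t * ‖F t‖ ^ 2 - 2 * Z * (η t * (‖F t‖ * ‖g t‖)))
            + Z ^ 2 * (η t * ‖g t‖ ^ 2) := by
        funext t; ring
      have hsub : Integrable (fun t => η t * ‖F t‖ ^ 2
          - 2 * Z * (η t * (‖F t‖ * ‖g t‖))) μ := hF2.sub (hFg.const_mul (2 * Z))
      rw [hfun, integral_add hsub (hg_int.const_mul (Z ^ 2)),
        integral_sub hF2 (hFg.const_mul (2 * Z)), integral_const_mul, integral_const_mul,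
        hg_one]
    have hZ2 : Z ^ 2 ≤ X := by nlinarith [hqe ▸ hq]
    have := Real.sqrt_le_sqrt hZ2
    rwa [Real.sqrt_sq hZ0] at this
  calc Real.sqrt (1 - ρ ^ 2) * ∑ i, Real.sqrt (A i)
      = ∑ i, Real.sqrt (1 - ρ ^ 2) * Real.sqrt (A i) := Finset.mul_sum _ _ _
    _ ≤ ∑ i, r i := Finset.sum_le_sum (fun i _ => key i)
    _ = ∫ t, η t * RCLike.re (inner 𝕜 (F t) (g t)) ∂μ := hsum.symm
    _ ≤ Z := hSZ
    _ ≤ Real.sqrt X := hcs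
end
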